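/- arXiv:2407.19272 — 7 statements merged into one kernel-verified Lean document; each statement's English description precedes it below -/
import Mathlib

section
/- Consider the preconditioned Fletcher–Reeves nonlinear CG iteration for a differentiable E : ℝⁿ → ℝ with symmetric positive definite preconditioner M, with nonzero gradients g^(k) = ∇E(f^(k)) at every iterate. Suppose every step length α_k satisfies the strong Wolfe conditions with constants 0 < c₁ < c₂ < 1. Then for all k ≥ 0, −1/(1−c₂) ≤ (g^(k)ᵀ p^(k)) / (g^(k)ᵀ M⁻¹ g^(k)) ≤ (2c₂ − 1)/(1 − c₂). -/
open Matrix

/-- Lemma 5.3: in the preconditioned Fletcher–Reeves nonlinear CG iteration,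
if every step length satisfies the strong Wolfe conditions with
`0 < c₁ < c₂ < 1`, then `-1/(1-c₂) ≤ (g⁽ᵏ⁾ᵀ p⁽ᵏ⁾)/(g⁽ᵏ⁾ᵀ M⁻¹ g⁽ᵏ⁾) ≤ (2c₂-1)/(1-c₂)`
for all `k ≥ 0`. -/
theorem pcg_descent_ratio_bounds
    (n : ℕ) (hn : 1 ≤ n)
    (E : (Fin n → ℝ) → ℝ) (gradE : (Fin n → ℝ) → (Fin n → ℝ))
    (hdiff : Differentiable ℝ E)
    (hgrad : ∀ x v, fderiv ℝ E x v = gradE x ⬝ᵥ v)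
    (M : Matrix (Fin n) (Fin n) ℝ) (hM : M.PosDef)
    (f p : ℕ → (Fin n → ℝ)) (α : ℕ → ℝ)
    (c₁ c₂ : ℝ) (hc₁ : 0 < c₁) (hc₁₂ : c₁ < c₂) (hc₂ : c₂ < 1)
    (hgne : ∀ k, gradE (f k) ≠ 0)
    (hα : ∀ k, 0 < α k)
    (hp0 : p 0 = -(M⁻¹.mulVec (gradE (f 0))))
    (hf : ∀ k, f (k + 1) = f k + α k • p k)
    (hpk : ∀ k, p (k + 1) =
      -(M⁻¹.mulVec (gradE (f (k + 1)))) +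
        ((gradE (f (k + 1)) ⬝ᵥ M⁻¹.mulVec (gradE (f (k + 1)))) /
          (gradE (f k) ⬝ᵥ M⁻¹.mulVec (gradE (f k)))) • p k)
    (hWolfe1 : ∀ k, E (f k + α k • p k) ≤ E (f k) + c₁ * α k * (gradE (f k) ⬝ᵥ p k))
    (hWolfe2 : ∀ k, |gradE (f k + α k • p k) ⬝ᵥ p k| ≤ c₂ * |gradE (f k) ⬝ᵥ p k|) :
    ∀ k, -(1 / (1 - c₂)) ≤
        (gradE (f k) ⬝ᵥ p k) / (gradE (f k) ⬝ᵥ M⁻¹.mulVec (gradE (f k))) ∧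
      (gradE (f k) ⬝ᵥ p k) / (gradE (f k) ⬝ᵥ M⁻¹.mulVec (gradE (f k))) ≤
        (2 * c₂ - 1) / (1 - c₂) := by
  have hc2pos : 0 < c₂ := hc₁.trans hc₁₂
  have h1c : (0:ℝ) < 1 - c₂ := by linarith
  have hMinv : (M⁻¹).PosDef := hM.inv
  have hT : ∀ k, 0 < gradE (f k) ⬝ᵥ M⁻¹.mulVec (gradE (f k)) := fun k => by
    have := hMinv.dotProduct_mulVec_pos (hgne k)
    simpa using this
  intro k
  induction k with
  | zero =>
    have h0 : gradE (f 0) ⬝ᵥ p 0 = -(gradE (f 0) ⬝ᵥ M⁻¹.mulVec (gradE (f 0))) := by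
      rw [hp0, dotProduct_neg]
    rw [h0, neg_div, div_self (hT 0).ne']
    constructor
    · rw [neg_le_neg_iff, le_div_iff₀ h1c]; linarith
    · rw [le_div_iff₀ h1c]; linarith
  | succ k ih =>
    set T := gradE (f k) ⬝ᵥ M⁻¹.mulVec (gradE (f k)) with hTdef
    set T' := gradE (f (k+1)) ⬝ᵥ M⁻¹.mulVec (gradE (f (k+1))) with hT'def
    set a := gradE (f k) ⬝ᵥ p k with hadef
    set b := gradE (f (k+1)) ⬝ᵥ p k with hbdef
    have hTpos : 0 < T := hT k
    have hT'pos : 0 < T' := hT (k+1)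
    -- bound on a from induction hypothesis
    have haL : -(1 / (1 - c₂)) * T ≤ a := (le_div_iff₀ hTpos).mp ih.1
    have haU : a ≤ (2 * c₂ - 1) / (1 - c₂) * T := (div_le_iff₀ hTpos).mp ih.2
    have habs : |a| ≤ T / (1 - c₂) := by
      rw [abs_le]
      constructor
      · have : -(1 / (1 - c₂)) * T = -(T / (1 - c₂)) := by ring
        linarith [haL, this.symm.le]
      · have h2 : (2 * c₂ - 1) / (1 - c₂) * T ≤ T / (1 - c₂) := by
          rw [div_mul_eq_mul_div, div_le_div_iff₀ h1c h1c]
          nlinarith [mul_pos (mul_pos h1c hTpos) h1c]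
        linarith
    -- bound on b from Wolfe condition
    have hb : |b| ≤ c₂ * |a| := by
      have := hWolfe2 k
      rw [← hf k] at this
      exact this
    have hb' : |b| ≤ c₂ * (T / (1 - c₂)) := by
      calc |b| ≤ c₂ * |a| := hb
        _ ≤ c₂ * (T / (1 - c₂)) := by
            exact mul_le_mul_of_nonneg_left habs hc2pos.le
    have hbT : -(c₂ / (1 - c₂)) ≤ b / T ∧ b / T ≤ c₂ / (1 - c₂) := by
      rw [abs_le] at hb'
      constructor
      · rw [le_div_iff₀ hTpos]
        have : -(c₂ / (1 - c₂)) * T = -(c₂ * (T / (1 - c₂))) := by ring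
        linarith [this.le]
      · rw [div_le_iff₀ hTpos]
        have : c₂ / (1 - c₂) * T = c₂ * (T / (1 - c₂)) := by ring
        linarith [this.ge]
    -- compute the new ratio
    have hdp : gradE (f (k+1)) ⬝ᵥ p (k+1) = -T' + (T' / T) * b := by
      rw [hpk k, dotProduct_add, dotProduct_neg, dotProduct_smul, smul_eq_mul]
    have hratio : (gradE (f (k+1)) ⬝ᵥ p (k+1)) / T' = -1 + b / T := by
      rw [hdp]
      field_simp
    rw [hratio]
    have e1 : -(1:ℝ) - c₂ / (1 - c₂) = -(1 / (1 - c₂)) := by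
      field_simp
      ring
    have e2 : -(1:ℝ) + c₂ / (1 - c₂) = (2 * c₂ - 1) / (1 - c₂) := by
      field_simp
      ring
    constructor
    · rw [← e1]; linarith [hbT.1]
    · rw [← e2]; linarith [hbT.2]
end

section
/- Consider the preconditioned Fletcher–Reeves nonlinear CG iteration for a differentiable E : ℝⁿ → ℝ with symmetric positive definite preconditioner M, with nonzero gradients g^(k) = ∇E(f^(k)) at every iterate. Suppose every step length α_k satisfies the strong Wolfe conditions with constants 0 < c₁ < c₂ < 1/2. Then for all k ≥ 0, the direction p^(k) is a descent direction of E at f^(k), i.e., g^(k)ᵀ p^(k) < 0. -/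
open Matrix

/-- Corollary 5.4: in the preconditioned Fletcher–Reeves nonlinear CG iteration,
if every step length satisfies the strong Wolfe conditions with
`0 < c₁ < c₂ < 1/2`, then every direction `p⁽ᵏ⁾` is a descent direction,
i.e. `g⁽ᵏ⁾ᵀ p⁽ᵏ⁾ < 0`. -/
theorem pcg_descent_direction
    (n : ℕ) (hn : 1 ≤ n)
    (E : (Fin n → ℝ) → ℝ) (gradE : (Fin n → ℝ) → (Fin n → ℝ))
    (hdiff : Differentiable ℝ E)
    (hgrad : ∀ x v, fderiv ℝ E x v = gradE x ⬝ᵥ v)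
    (M : Matrix (Fin n) (Fin n) ℝ) (hM : M.PosDef)
    (f p : ℕ → (Fin n → ℝ)) (α : ℕ → ℝ)
    (c₁ c₂ : ℝ) (hc₁ : 0 < c₁) (hc₁₂ : c₁ < c₂) (hc₂ : c₂ < 1 / 2)
    (hgne : ∀ k, gradE (f k) ≠ 0)
    (hα : ∀ k, 0 < α k)
    (hp0 : p 0 = -(M⁻¹.mulVec (gradE (f 0))))
    (hf : ∀ k, f (k + 1) = f k + α k • p k)
    (hpk : ∀ k, p (k + 1) =
      -(M⁻¹.mulVec (gradE (f (k + 1)))) +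
        ((gradE (f (k + 1)) ⬝ᵥ M⁻¹.mulVec (gradE (f (k + 1)))) /
          (gradE (f k) ⬝ᵥ M⁻¹.mulVec (gradE (f k)))) • p k)
    (hWolfe1 : ∀ k, E (f k + α k • p k) ≤ E (f k) + c₁ * α k * (gradE (f k) ⬝ᵥ p k))
    (hWolfe2 : ∀ k, |gradE (f k + α k • p k) ⬝ᵥ p k| ≤ c₂ * |gradE (f k) ⬝ᵥ p k|) :
    ∀ k, gradE (f k) ⬝ᵥ p k < 0 := by
  have hMinv := hM.inv
  set S : ℕ → ℝ := fun k => gradE (f k) ⬝ᵥ M⁻¹.mulVec (gradE (f k)) with hS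
  have hSpos : ∀ k, 0 < S k := by
    intro k
    have := hMinv.dotProduct_mulVec_pos (hgne k)
    simpa [hS] using this
  have hc₂0 : 0 < c₂ := lt_trans hc₁ hc₁₂
  have hc2' : 0 < 1 - c₂ := by linarith
  have key : ∀ k, (1 - c₂) * (gradE (f k) ⬝ᵥ p k) ≤ -((1 - 2 * c₂) * S k) ∧
      -(S k) ≤ (1 - c₂) * (gradE (f k) ⬝ᵥ p k) := by
    intro k
    induction k with
    | zero =>
      have h0 : gradE (f 0) ⬝ᵥ p 0 = -S 0 := by
        rw [hp0, dotProduct_neg]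
      rw [h0]
      constructor
      · nlinarith [hSpos 0]
      · nlinarith [hSpos 0]
    | succ k ih =>
      obtain ⟨ih1, ih2⟩ := ih
      have hneg : gradE (f k) ⬝ᵥ p k < 0 := by nlinarith [hSpos k]
      have hw := hWolfe2 k
      rw [← hf k, abs_of_neg hneg] at hw
      set u := gradE (f (k + 1)) ⬝ᵥ p k with hu
      have hub : (1 - c₂) * u ≤ c₂ * S k := by
        have h1 : u ≤ c₂ * -(gradE (f k) ⬝ᵥ p k) := (abs_le.mp hw).2
        nlinarith
      have hlb : -(c₂ * S k) ≤ (1 - c₂) * u := by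
        have h1 : -(c₂ * -(gradE (f k) ⬝ᵥ p k)) ≤ u := (abs_le.mp hw).1
        nlinarith
      set β := S (k + 1) / S k with hβ
      have hβ0 : 0 ≤ β := div_nonneg (hSpos (k + 1)).le (hSpos k).le
      have hβS : β * S k = S (k + 1) := div_mul_cancel₀ _ (hSpos k).ne'
      have hval : gradE (f (k + 1)) ⬝ᵥ p (k + 1) = -S (k + 1) + β * u := by
        rw [hpk k, dotProduct_add, dotProduct_neg, dotProduct_smul, smul_eq_mul]
      have hmul1 : β * ((1 - c₂) * u) ≤ β * (c₂ * S k) :=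
        mul_le_mul_of_nonneg_left hub hβ0
      have hmul2 : β * (-(c₂ * S k)) ≤ β * ((1 - c₂) * u) :=
        mul_le_mul_of_nonneg_left hlb hβ0
      have hβc : c₂ * (β * S k) = c₂ * S (k + 1) := by rw [hβS]
      rw [hval]
      constructor
      · nlinarith [hSpos (k + 1)]
      · nlinarith [hSpos (k + 1)]
  intro k
  obtain ⟨h1, _⟩ := key k
  nlinarith [hSpos k]
end

section
/- Consider the preconditioned Fletcher–Reeves nonlinear CG iteration for a differentiable E : ℝⁿ → ℝ with symmetric positive definite preconditioner M, with nonzero gradients g^(k) = ∇E(f^(k)) at every iterate. Assume E is bounded below on ℝⁿ, ∇E is Lipschitz continuous on ℝⁿ, and every step length α_k satisfies the strong Wolfe conditions with constants 0 < c₁ < c₂ < 1/2. Then the series Σ_{k=0}^{∞} cos²θ_M^(k) · ‖g^(k)‖²_{M⁻¹} converges, where cos θ_M^(k) = −(g^(k)ᵀ p^(k)) / (‖g^(k)‖_{M⁻¹} ‖p^(k)‖_M); equivalently, Σ_{k=0}^{∞} (g^(k)ᵀ p^(k))² / (p^(k)ᵀ M p^(k)) < ∞. -/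
open Matrix

lemma posdef_lower_bound {n : ℕ} (hn : 1 ≤ n) (M : Matrix (Fin n) (Fin n) ℝ) (hM : M.PosDef) :
    ∃ c > 0, ∀ x : Fin n → ℝ, c * ‖x‖ ^ 2 ≤ x ⬝ᵥ M.mulVec x := by
  have hpos : ∀ x : Fin n → ℝ, x ≠ 0 → 0 < x ⬝ᵥ M.mulVec x := by
    intro x hx; have := hM.dotProduct_mulVec_pos hx; simpa using this
  have hcont : Continuous fun x : Fin n → ℝ => x ⬝ᵥ M.mulVec x := by
    have : Continuous fun x : Fin n → ℝ => ∑ i, x i * ∑ j, M i j * x j := by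
      apply continuous_finset_sum
      intro i _
      exact (continuous_apply i).mul (continuous_finset_sum _ fun j _ =>
        continuous_const.mul (continuous_apply j))
    simpa [dotProduct, Matrix.mulVec] using this
  have hcpt : IsCompact (Metric.sphere (0 : Fin n → ℝ) 1) := isCompact_sphere _ _
  have hne : (Metric.sphere (0 : Fin n → ℝ) 1).Nonempty := by
    refine ⟨Pi.single ⟨0, hn⟩ 1, ?_⟩
    simp [mem_sphere_iff_norm, Pi.norm_single]
  obtain ⟨x₀, hx₀, hmin⟩ := hcpt.exists_isMinOn hne hcont.continuousOn

  have hx₀n : ‖x₀‖ = 1 := by simpa [mem_sphere_iff_norm] using hx₀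

  have hx₀ne : x₀ ≠ 0 := by
    intro h; rw [h] at hx₀n; simp at hx₀n
  refine ⟨x₀ ⬝ᵥ M.mulVec x₀, hpos _ hx₀ne, ?_⟩
  intro x
  rcases eq_or_ne x 0 with rfl | hx
  · simp
  · have h1 : (0:ℝ) < ‖x‖ := norm_pos_iff.mpr hx
    set u := ‖x‖⁻¹ • x with hu
    have hus : u ∈ Metric.sphere (0 : Fin n → ℝ) 1 := by
      simp [mem_sphere_iff_norm, hu, norm_smul, abs_of_pos (inv_pos.mpr h1),
        inv_mul_cancel₀ h1.ne']
    have hle : x₀ ⬝ᵥ M.mulVec x₀ ≤ u ⬝ᵥ M.mulVec u := hmin hus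
    have huq : u ⬝ᵥ M.mulVec u = ‖x‖⁻¹ * ‖x‖⁻¹ * (x ⬝ᵥ M.mulVec x) := by
      simp [hu, Matrix.mulVec_smul, smul_dotProduct, dotProduct_smul,
        smul_eq_mul]
      ring
    rw [huq] at hle
    have h2 : ‖x‖ ^ 2 > 0 := by positivity
    calc (x₀ ⬝ᵥ M.mulVec x₀) * ‖x‖ ^ 2 ≤ (‖x‖⁻¹ * ‖x‖⁻¹ * (x ⬝ᵥ M.mulVec x)) * ‖x‖ ^ 2 := by
          exact mul_le_mul_of_nonneg_right hle h2.le
      _ = x ⬝ᵥ M.mulVec x := by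
          have hne' : ‖x‖ ≠ 0 := h1.ne'
          rw [sq]
          field_simp

lemma dot_le_pi_norm {n : ℕ} (x y : Fin n → ℝ) : x ⬝ᵥ y ≤ n * ‖x‖ * ‖y‖ := by
  calc x ⬝ᵥ y = ∑ i, x i * y i := rfl
    _ ≤ ∑ _i : Fin n, ‖x‖ * ‖y‖ := by
        refine Finset.sum_le_sum fun i _ => ?_
        calc x i * y i ≤ |x i * y i| := le_abs_self _
          _ = |x i| * |y i| := abs_mul _ _
          _ ≤ ‖x‖ * ‖y‖ := by
              have h1 : |x i| ≤ ‖x‖ := by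
                simpa [Real.norm_eq_abs] using norm_le_pi_norm x i
              have h2 : |y i| ≤ ‖y‖ := by
                simpa [Real.norm_eq_abs] using norm_le_pi_norm y i
              exact mul_le_mul h1 h2 (abs_nonneg _) (norm_nonneg _)
    _ = n * ‖x‖ * ‖y‖ := by simp [Finset.sum_const, mul_assoc]

set_option maxHeartbeats 1000000 in
/-- Lemma 5.5 (modified Zoutendijk's condition): for the preconditioned
Fletcher–Reeves nonlinear CG iteration with `E` bounded below, `∇E` Lipschitz,
and strong Wolfe step lengths with `0 < c₁ < c₂ < 1/2`, the series
`∑ₖ cos²θ_M⁽ᵏ⁾ ‖g⁽ᵏ⁾‖²_{M⁻¹}` converges, where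
`cos θ_M⁽ᵏ⁾ = −(g⁽ᵏ⁾ᵀp⁽ᵏ⁾)/(‖g⁽ᵏ⁾‖_{M⁻¹}‖p⁽ᵏ⁾‖_M)`. -/
theorem pcg_modified_zoutendijk
    (n : ℕ) (hn : 1 ≤ n)
    (E : (Fin n → ℝ) → ℝ) (gradE : (Fin n → ℝ) → (Fin n → ℝ))
    (hdiff : Differentiable ℝ E)
    (hgrad : ∀ x v, fderiv ℝ E x v = gradE x ⬝ᵥ v)
    (B : ℝ) (hbdd : ∀ x, B ≤ E x)
    (C : ℝ) (hC : 0 < C)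
    (hLip : ∀ x y, ‖gradE y - gradE x‖ ≤ C * ‖y - x‖)
    (M : Matrix (Fin n) (Fin n) ℝ) (hM : M.PosDef)
    (f p : ℕ → (Fin n → ℝ)) (α : ℕ → ℝ)
    (c₁ c₂ : ℝ) (hc₁ : 0 < c₁) (hc₁₂ : c₁ < c₂) (hc₂ : c₂ < 1 / 2)
    (hgne : ∀ k, gradE (f k) ≠ 0)
    (hα : ∀ k, 0 < α k)
    (hp0 : p 0 = -(M⁻¹.mulVec (gradE (f 0))))
    (hf : ∀ k, f (k + 1) = f k + α k • p k)
    (hpk : ∀ k, p (k + 1) =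
      -(M⁻¹.mulVec (gradE (f (k + 1)))) +
        ((gradE (f (k + 1)) ⬝ᵥ M⁻¹.mulVec (gradE (f (k + 1)))) /
          (gradE (f k) ⬝ᵥ M⁻¹.mulVec (gradE (f k)))) • p k)
    (hWolfe1 : ∀ k, E (f k + α k • p k) ≤ E (f k) + c₁ * α k * (gradE (f k) ⬝ᵥ p k))
    (hWolfe2 : ∀ k, |gradE (f k + α k • p k) ⬝ᵥ p k| ≤ c₂ * |gradE (f k) ⬝ᵥ p k|) :
    Summable (fun k : ℕ =>
      ((-(gradE (f k) ⬝ᵥ p k)) /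
          (Real.sqrt (gradE (f k) ⬝ᵥ M⁻¹.mulVec (gradE (f k))) *
            Real.sqrt (p k ⬝ᵥ M.mulVec (p k)))) ^ 2 *
        (gradE (f k) ⬝ᵥ M⁻¹.mulVec (gradE (f k)))) := by
  set g : ℕ → (Fin n → ℝ) := fun k => gradE (f k) with hg
  set γ : ℕ → ℝ := fun k => g k ⬝ᵥ M⁻¹.mulVec (g k) with hγdef
  set δ : ℕ → ℝ := fun k => g k ⬝ᵥ p k with hδdef
  have hc₂0 : 0 < c₂ := hc₁.trans hc₁₂
  have hc₂1 : 0 < 1 - c₂ := by linarith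
  set a : ℝ := (1 - 2 * c₂) / (1 - c₂) with ha
  set b : ℝ := 1 / (1 - c₂) with hb
  have hapos : 0 < a := by
    apply div_pos <;> linarith
  have hbpos : 0 < b := by
    apply div_pos <;> linarith
  have ha_eq : a = 1 - c₂ * b := by
    rw [ha, hb]; field_simp; ring
  have hb_eq : b = 1 + c₂ * b := by
    rw [hb]; field_simp; ring
  have ha1 : a ≤ 1 := by
    rw [ha, div_le_one hc₂1]; linarith
  have hb1 : 1 ≤ b := by
    rw [hb, le_div_iff₀ hc₂1]; linarith
  -- positivity of γ
  have hMi : (M⁻¹).PosDef := hM.inv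
  have hγpos : ∀ k, 0 < γ k := by
    intro k
    have := hMi.dotProduct_mulVec_pos (hgne k)
    simpa using this
  -- the Al-Baali bounds
  have hind : ∀ k, δ k ≤ -(a * γ k) ∧ -(b * γ k) ≤ δ k := by
    intro k
    induction k with
    | zero =>
      have h0 : δ 0 = -(γ 0) := by
        simp only [hδdef, hγdef, hg, hp0, dotProduct_neg]
      rw [h0]
      have := (hγpos 0)
      constructor <;> nlinarith
    | succ k ih =>
      have hδneg : δ k < 0 := lt_of_le_of_lt ih.1 (by nlinarith [hγpos k])
      have hw := hWolfe2 k
      rw [← hf k] at hw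
      have habs : |δ k| = -δ k := abs_of_neg hδneg
      rw [habs] at hw
      obtain ⟨hw2, hw1⟩ := abs_le.mp hw
      -- hw2 : -(c₂ * -δ k) ≤ g (k+1) ⬝ᵥ p k ; hw1 : ≤ c₂ * -δ k
      have hkey : δ (k + 1) = -(γ (k + 1)) + γ (k + 1) / γ k * (g (k + 1) ⬝ᵥ p k) := by
        simp only [hδdef, hγdef, hg, hpk k, dotProduct_add, dotProduct_neg,
          dotProduct_smul, smul_eq_mul]
      have hq : γ (k + 1) / γ k * γ k = γ (k + 1) := div_mul_cancel₀ _ (hγpos k).ne'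
      have hqpos : 0 < γ (k + 1) / γ k := div_pos (hγpos (k + 1)) (hγpos k)
      have hup : -δ k ≤ b * γ k := by linarith [ih.2]
      constructor
      · rw [hkey]
        have h1 : g (k + 1) ⬝ᵥ p k ≤ c₂ * (b * γ k) := by
          calc g (k + 1) ⬝ᵥ p k ≤ c₂ * -δ k := hw1
            _ ≤ c₂ * (b * γ k) := by nlinarith
        have h2 : γ (k + 1) / γ k * (g (k + 1) ⬝ᵥ p k) ≤ c₂ * b * γ (k + 1) := by
          calc γ (k + 1) / γ k * (g (k + 1) ⬝ᵥ p k)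
              ≤ γ (k + 1) / γ k * (c₂ * (b * γ k)) :=
                mul_le_mul_of_nonneg_left h1 hqpos.le
            _ = c₂ * b * (γ (k + 1) / γ k * γ k) := by ring
            _ = c₂ * b * γ (k + 1) := by rw [hq]
        have : -(γ (k + 1)) + c₂ * b * γ (k + 1) = -(a * γ (k + 1)) := by
          rw [ha_eq]; ring
        linarith
      · rw [hkey]
        have h1 : -(c₂ * (b * γ k)) ≤ g (k + 1) ⬝ᵥ p k := by
          calc -(c₂ * (b * γ k)) ≤ -(c₂ * -δ k) := by nlinarith
            _ ≤ g (k + 1) ⬝ᵥ p k := hw2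
        have h2 : -(c₂ * b * γ (k + 1)) ≤ γ (k + 1) / γ k * (g (k + 1) ⬝ᵥ p k) := by
          calc -(c₂ * b * γ (k + 1)) = -(c₂ * b * (γ (k + 1) / γ k * γ k)) := by rw [hq]
            _ = γ (k + 1) / γ k * (-(c₂ * (b * γ k))) := by ring
            _ ≤ γ (k + 1) / γ k * (g (k + 1) ⬝ᵥ p k) :=
                mul_le_mul_of_nonneg_left h1 hqpos.le
        have : -(γ (k + 1)) + -(c₂ * b * γ (k + 1)) = -(b * γ (k + 1)) := by
          conv_rhs => rw [hb_eq]
          ring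
        linarith
  have hδneg : ∀ k, δ k < 0 := fun k =>
    lt_of_le_of_lt (hind k).1 (by nlinarith [hγpos k, hapos])
  have hpne : ∀ k, p k ≠ 0 := by
    intro k hk
    have : δ k = 0 := by simp [hδdef, hk]
    exact absurd this (hδneg k).ne
  have hpnorm : ∀ k, 0 < ‖p k‖ := fun k => norm_pos_iff.mpr (hpne k)
  have hpM : ∀ k, 0 < p k ⬝ᵥ M.mulVec (p k) := by
    intro k
    have := hM.dotProduct_mulVec_pos (hpne k)
    simpa using this
  -- step length lower bound and energy decrease
  set D : ℝ := c₁ * (1 - c₂) / (n * C) with hD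
  have hnpos : (0:ℝ) < n := by exact_mod_cast hn
  have hDpos : 0 < D := by
    apply div_pos (by nlinarith) (by nlinarith)
  clear_value D
  have hdec : ∀ k, E (f (k + 1)) + D * (δ k ^ 2 / ‖p k‖ ^ 2) ≤ E (f k) := by
    intro k
    have hw := hWolfe2 k
    rw [← hf k] at hw
    have habs : |δ k| = -δ k := abs_of_neg (hδneg k)
    rw [habs] at hw
    obtain ⟨hw2, _⟩ := abs_le.mp hw
    -- Lipschitz upper bound on (g(k+1) - g k) ⬝ᵥ p k
    have hLipb : (g (k + 1) - g k) ⬝ᵥ p k ≤ n * C * α k * ‖p k‖ ^ 2 := by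
      calc (g (k + 1) - g k) ⬝ᵥ p k ≤ n * ‖g (k + 1) - g k‖ * ‖p k‖ :=
            dot_le_pi_norm _ _
        _ ≤ n * (C * (α k * ‖p k‖)) * ‖p k‖ := by
            have h3 : ‖g (k + 1) - g k‖ ≤ C * (α k * ‖p k‖) := by
              have h := hLip (f k) (f (k + 1))
              have hdiff2 : f (k + 1) - f k = α k • p k := by rw [hf k]; abel
              rw [hdiff2, norm_smul, Real.norm_eq_abs, abs_of_pos (hα k)] at h
              simpa [hg] using h
            have : (0:ℝ) ≤ n * ‖p k‖ := by positivity
            nlinarith [norm_nonneg (p k), h3]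
        _ = n * C * α k * ‖p k‖ ^ 2 := by ring
    have hlow : (1 - c₂) * (-δ k) ≤ n * C * α k * ‖p k‖ ^ 2 := by
      have hsub : (g (k + 1) - g k) ⬝ᵥ p k = (g (k + 1) ⬝ᵥ p k) - δ k := by
        simp [hδdef, sub_dotProduct]
      have : (1 - c₂) * (-δ k) ≤ (g (k + 1) - g k) ⬝ᵥ p k := by
        rw [hsub]; linarith
      linarith
    have hαb : (1 - c₂) * (-δ k) / (n * C * ‖p k‖ ^ 2) ≤ α k := by
      rw [div_le_iff₀ (mul_pos (mul_pos hnpos hC) (pow_pos (hpnorm k) 2))]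
      nlinarith
    have hE := hWolfe1 k
    rw [← hf k] at hE
    have hstep : c₁ * α k * δ k ≤ -(D * (δ k ^ 2 / ‖p k‖ ^ 2)) := by
      have h4 : c₁ * α k * δ k ≤ c₁ * ((1 - c₂) * (-δ k) / (n * C * ‖p k‖ ^ 2)) * δ k := by
        have := mul_le_mul_of_nonneg_left hαb hc₁.le
        nlinarith [hδneg k]
      have h5 : c₁ * ((1 - c₂) * (-δ k) / (n * C * ‖p k‖ ^ 2)) * δ k
          = -(D * (δ k ^ 2 / ‖p k‖ ^ 2)) := by
        rw [hD]
        field_simp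
      linarith [h4, h5.le]
    linarith
  -- partial sums bounded
  have hsum : ∀ K, ∑ k ∈ Finset.range K, D * (δ k ^ 2 / ‖p k‖ ^ 2) ≤ E (f 0) - B := by
    intro K
    have htel : ∀ K, ∑ k ∈ Finset.range K, D * (δ k ^ 2 / ‖p k‖ ^ 2) ≤ E (f 0) - E (f K) := by
      intro K
      induction K with
      | zero => simp
      | succ K ih =>
        rw [Finset.sum_range_succ]
        have := hdec K
        linarith
    linarith [htel K, hbdd (f K)]
  have hbsum : Summable (fun k => D * (δ k ^ 2 / ‖p k‖ ^ 2)) := by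
    apply summable_of_sum_range_le (fun k => by positivity) hsum
  -- compare with the target series
  obtain ⟨c, hcpos, hcbound⟩ := posdef_lower_bound hn M hM
  have hineq : ∀ k,
      ((-(g k ⬝ᵥ p k)) / (Real.sqrt (γ k) * Real.sqrt (p k ⬝ᵥ M.mulVec (p k)))) ^ 2 * γ k
        ≤ (1 / (c * D)) * (D * (δ k ^ 2 / ‖p k‖ ^ 2)) := by
    intro k
    have hQ := hpM k
    have hγ := hγpos k
    have hval : ((-(g k ⬝ᵥ p k)) /
        (Real.sqrt (γ k) * Real.sqrt (p k ⬝ᵥ M.mulVec (p k)))) ^ 2 * γ k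
        = δ k ^ 2 / (p k ⬝ᵥ M.mulVec (p k)) := by
      rw [div_pow, mul_pow, Real.sq_sqrt hγ.le, Real.sq_sqrt hQ.le, neg_pow]
      rw [hδdef]
      field_simp
    rw [hval]
    have hcb := hcbound (p k)
    have h6 : δ k ^ 2 / (p k ⬝ᵥ M.mulVec (p k)) ≤ δ k ^ 2 / (c * ‖p k‖ ^ 2) := by
      exact div_le_div_of_nonneg_left (sq_nonneg _) (mul_pos hcpos (pow_pos (hpnorm k) 2)) hcb
    have h7 : (1 / (c * D)) * (D * (δ k ^ 2 / ‖p k‖ ^ 2)) = δ k ^ 2 / (c * ‖p k‖ ^ 2) := by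
      have hDne : D ≠ 0 := hDpos.ne'
      have hcne : c ≠ 0 := hcpos.ne'
      have hpne2 : ‖p k‖ ^ 2 ≠ 0 := (pow_pos (hpnorm k) 2).ne'
      field_simp
    linarith
  have : Summable (fun k => (1 / (c * D)) * (D * (δ k ^ 2 / ‖p k‖ ^ 2))) :=
    hbsum.mul_left _
  refine Summable.of_nonneg_of_le (fun k => ?_) (fun k => ?_) this
  · exact mul_nonneg (sq_nonneg _) (hγpos k).le
  · exact hineq k
end

section
/- Consider the preconditioned Fletcher–Reeves nonlinear CG iteration for a differentiable E : ℝⁿ → ℝ with symmetric positive definite preconditioner M, with nonzero gradients g^(k) = ∇E(f^(k)) at every iterate, and suppose every step length α_k satisfies the strong Wolfe conditions with constants 0 < c₁ < c₂ < 1/2. Define cos θ_M^(k) = −(g^(k)ᵀ p^(k)) / (‖g^(k)‖_{M⁻¹} ‖p^(k)‖_M). Then for all k ≥ 0, ((1 − 2c₂)/(1 − c₂)) · ‖g^(k)‖_{M⁻¹}/‖p^(k)‖_M ≤ cos θ_M^(k) ≤ (1/(1 − c₂)) · ‖g^(k)‖_{M⁻¹}/‖p^(k)‖_M. -/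
open Matrix

/-- The two-sided bound (eq. (5.2)) in the proof of Theorem 5.6: under strong
Wolfe step lengths with `0 < c₁ < c₂ < 1/2`,
`((1−2c₂)/(1−c₂))·‖g⁽ᵏ⁾‖_{M⁻¹}/‖p⁽ᵏ⁾‖_M ≤ cos θ_M⁽ᵏ⁾ ≤ (1/(1−c₂))·‖g⁽ᵏ⁾‖_{M⁻¹}/‖p⁽ᵏ⁾‖_M`. -/
theorem pcg_cos_theta_bounds
    (n : ℕ) (hn : 1 ≤ n)
    (E : (Fin n → ℝ) → ℝ) (gradE : (Fin n → ℝ) → (Fin n → ℝ))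
    (hdiff : Differentiable ℝ E)
    (hgrad : ∀ x v, fderiv ℝ E x v = gradE x ⬝ᵥ v)
    (M : Matrix (Fin n) (Fin n) ℝ) (hM : M.PosDef)
    (f p : ℕ → (Fin n → ℝ)) (α : ℕ → ℝ)
    (c₁ c₂ : ℝ) (hc₁ : 0 < c₁) (hc₁₂ : c₁ < c₂) (hc₂ : c₂ < 1 / 2)
    (hgne : ∀ k, gradE (f k) ≠ 0)
    (hα : ∀ k, 0 < α k)
    (hp0 : p 0 = -(M⁻¹.mulVec (gradE (f 0))))
    (hf : ∀ k, f (k + 1) = f k + α k • p k)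
    (hpk : ∀ k, p (k + 1) =
      -(M⁻¹.mulVec (gradE (f (k + 1)))) +
        ((gradE (f (k + 1)) ⬝ᵥ M⁻¹.mulVec (gradE (f (k + 1)))) /
          (gradE (f k) ⬝ᵥ M⁻¹.mulVec (gradE (f k)))) • p k)
    (hWolfe1 : ∀ k, E (f k + α k • p k) ≤ E (f k) + c₁ * α k * (gradE (f k) ⬝ᵥ p k))
    (hWolfe2 : ∀ k, |gradE (f k + α k • p k) ⬝ᵥ p k| ≤ c₂ * |gradE (f k) ⬝ᵥ p k|) :
    ∀ k,
      ((1 - 2 * c₂) / (1 - c₂)) *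
          (Real.sqrt (gradE (f k) ⬝ᵥ M⁻¹.mulVec (gradE (f k))) /
            Real.sqrt (p k ⬝ᵥ M.mulVec (p k))) ≤
        (-(gradE (f k) ⬝ᵥ p k)) /
          (Real.sqrt (gradE (f k) ⬝ᵥ M⁻¹.mulVec (gradE (f k))) *
            Real.sqrt (p k ⬝ᵥ M.mulVec (p k))) ∧
      (-(gradE (f k) ⬝ᵥ p k)) /
          (Real.sqrt (gradE (f k) ⬝ᵥ M⁻¹.mulVec (gradE (f k))) *
            Real.sqrt (p k ⬝ᵥ M.mulVec (p k))) ≤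
        (1 / (1 - c₂)) *
          (Real.sqrt (gradE (f k) ⬝ᵥ M⁻¹.mulVec (gradE (f k))) /
            Real.sqrt (p k ⬝ᵥ M.mulVec (p k))) := by
  have hc₂0 : 0 < c₂ := lt_trans hc₁ hc₁₂
  have h1c : 0 < 1 - c₂ := by linarith
  -- positivity of A k = gᵀ M⁻¹ g
  have hMinv : M⁻¹.PosDef := hM.inv
  have hA : ∀ k, 0 < gradE (f k) ⬝ᵥ M⁻¹.mulVec (gradE (f k)) := by
    intro k
    have := hMinv.dotProduct_mulVec_pos (hgne k)
    simpa using this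
  -- key bounds on gᵀp by induction
  have key : ∀ k,
      -(1 / (1 - c₂)) * (gradE (f k) ⬝ᵥ M⁻¹.mulVec (gradE (f k))) ≤
        gradE (f k) ⬝ᵥ p k ∧
      gradE (f k) ⬝ᵥ p k ≤
        -((1 - 2 * c₂) / (1 - c₂)) * (gradE (f k) ⬝ᵥ M⁻¹.mulVec (gradE (f k))) := by
    intro k
    induction k with
    | zero =>
      have hA0 := hA 0
      have : gradE (f 0) ⬝ᵥ p 0 = -(gradE (f 0) ⬝ᵥ M⁻¹.mulVec (gradE (f 0))) := by
        rw [hp0, dotProduct_neg]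
      rw [this]
      constructor
      · rw [neg_mul, neg_le_neg_iff, div_mul_eq_mul_div, le_div_iff₀ h1c]
        nlinarith
      · rw [neg_mul, neg_le_neg_iff, div_mul_eq_mul_div, div_le_iff₀ h1c]
        nlinarith
    | succ k ih =>
      set A := gradE (f k) ⬝ᵥ M⁻¹.mulVec (gradE (f k)) with hAdef
      set A' := gradE (f (k + 1)) ⬝ᵥ M⁻¹.mulVec (gradE (f (k + 1))) with hA'def
      have hAk : 0 < A := hA k
      have hAk' : 0 < A' := hA (k + 1)
      -- upper bound on |g^{k+1} ⬝ p^k|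
      have hgp : gradE (f k) ⬝ᵥ p k ≤ -((1 - 2 * c₂) / (1 - c₂)) * A := ih.2
      have hgpl : -(1 / (1 - c₂)) * A ≤ gradE (f k) ⬝ᵥ p k := ih.1
      have hgpneg : gradE (f k) ⬝ᵥ p k < 0 := by
        have : 0 < (1 - 2 * c₂) / (1 - c₂) := div_pos (by linarith) h1c
        nlinarith
      have habs : |gradE (f k) ⬝ᵥ p k| ≤ (1 / (1 - c₂)) * A := by
        rw [abs_of_neg hgpneg]
        linarith
      have hW := hWolfe2 k
      rw [← hf k] at hW
      have hW2 : |gradE (f (k + 1)) ⬝ᵥ p k| ≤ c₂ / (1 - c₂) * A := by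
        calc |gradE (f (k + 1)) ⬝ᵥ p k| ≤ c₂ * |gradE (f k) ⬝ᵥ p k| := hW
        _ ≤ c₂ * ((1 / (1 - c₂)) * A) := by
            exact mul_le_mul_of_nonneg_left habs (le_of_lt hc₂0)
        _ = c₂ / (1 - c₂) * A := by ring
      -- expand g^{k+1} ⬝ p^{k+1}
      have hexp : gradE (f (k + 1)) ⬝ᵥ p (k + 1) =
          -A' + (A' / A) * (gradE (f (k + 1)) ⬝ᵥ p k) := by
        rw [hpk k, dotProduct_add, dotProduct_neg, dotProduct_smul]
        simp [smul_eq_mul]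
        rfl
      rw [hexp]
      have hbound : |(A' / A) * (gradE (f (k + 1)) ⬝ᵥ p k)| ≤ c₂ / (1 - c₂) * A' := by
        rw [abs_mul, abs_of_pos (div_pos hAk' hAk)]
        calc A' / A * |gradE (f (k + 1)) ⬝ᵥ p k| ≤ A' / A * (c₂ / (1 - c₂) * A) :=
              mul_le_mul_of_nonneg_left hW2 (div_pos hAk' hAk).le
        _ = c₂ / (1 - c₂) * A' := by field_simp
      rw [abs_le] at hbound
      constructor
      · have : -(1 / (1 - c₂)) * A' = -A' + -(c₂ / (1 - c₂) * A') := by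
          field_simp; ring
        rw [this]
        linarith [hbound.1]
      · have : -((1 - 2 * c₂) / (1 - c₂)) * A' = -A' + c₂ / (1 - c₂) * A' := by
          field_simp; ring
        rw [this]
        linarith [hbound.2]
  -- now derive the cos θ bounds
  intro k
  set A := gradE (f k) ⬝ᵥ M⁻¹.mulVec (gradE (f k)) with hAdef
  set B := p k ⬝ᵥ M.mulVec (p k) with hBdef
  have hAk : 0 < A := hA k
  have hgp := key k
  have hgpneg : gradE (f k) ⬝ᵥ p k < 0 := by
    have : 0 < (1 - 2 * c₂) / (1 - c₂) := div_pos (by linarith) h1c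
    nlinarith [hgp.2]
  have hpne : p k ≠ 0 := by
    intro h
    rw [h, dotProduct_zero] at hgpneg
    exact lt_irrefl 0 hgpneg
  have hBk : 0 < B := by
    have := hM.dotProduct_mulVec_pos hpne
    simpa [hBdef] using this
  set sA := Real.sqrt A with hsA
  set sB := Real.sqrt B with hsB
  have hsA0 : 0 < sA := Real.sqrt_pos.mpr hAk
  have hsB0 : 0 < sB := Real.sqrt_pos.mpr hBk
  have hsA2 : sA * sA = A := Real.mul_self_sqrt hAk.le
  have hsB2 : sB * sB = B := Real.mul_self_sqrt hBk.le
  constructor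
  · rw [mul_div_assoc' _ sA sB, div_le_div_iff₀ hsB0 (mul_pos hsA0 hsB0)]
    have h2 : (1 - 2 * c₂) / (1 - c₂) * A ≤ -(gradE (f k) ⬝ᵥ p k) := by
      have := hgp.2; linarith
    have hm := mul_le_mul_of_nonneg_right h2 hsB0.le
    have he : (1 - 2 * c₂) / (1 - c₂) * sA * (sA * sB)
        = (1 - 2 * c₂) / (1 - c₂) * A * sB := by rw [← hsA2]; ring
    linarith [he ▸ hm]
  · rw [mul_div_assoc' _ sA sB, div_le_div_iff₀ (mul_pos hsA0 hsB0) hsB0]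
    have h1 : -(gradE (f k) ⬝ᵥ p k) ≤ 1 / (1 - c₂) * A := by
      have := hgp.1; linarith
    have hm := mul_le_mul_of_nonneg_right h1 hsB0.le
    have he : 1 / (1 - c₂) * sA * (sA * sB)
        = 1 / (1 - c₂) * A * sB := by rw [← hsA2]; ring
    linarith [he ▸ hm]
end

section
/- Consider the preconditioned Fletcher–Reeves nonlinear CG iteration for a differentiable E : ℝⁿ → ℝ with symmetric positive definite preconditioner M, with nonzero gradients g^(k) = ∇E(f^(k)) at every iterate. Assume E is bounded below on ℝⁿ, ∇E is Lipschitz continuous on ℝⁿ, and every step length α_k satisfies the strong Wolfe conditions with constants 0 < c₁ < c₂ < 1/2. Then the series Σ_{k=0}^{∞} ‖g^(k)‖⁴_{M⁻¹} / ‖p^(k)‖²_M converges, i.e., Σ_{k=0}^{∞} (g^(k)ᵀM⁻¹g^(k))² / (p^(k)ᵀ M p^(k)) < ∞. -/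
open Matrix

/-- Crude Cauchy–Schwarz for the sup norm on `Fin n → ℝ`. -/
lemma dot_le_card_norm {n : ℕ} (a b : Fin n → ℝ) :
    a ⬝ᵥ b ≤ (n : ℝ) * ‖a‖ * ‖b‖ := by
  calc a ⬝ᵥ b ≤ ∑ _i : Fin n, ‖a‖ * ‖b‖ := by
        refine Finset.sum_le_sum fun i _ => ?_
        calc a i * b i ≤ |a i| * |b i| := by
              rw [← abs_mul]; exact le_abs_self _
          _ ≤ ‖a‖ * ‖b‖ := by
              apply mul_le_mul
              · simpa [Real.norm_eq_abs] using norm_le_pi_norm a i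
              · simpa [Real.norm_eq_abs] using norm_le_pi_norm b i
              · exact abs_nonneg _
              · exact norm_nonneg _
    _ = (n : ℝ) * ‖a‖ * ‖b‖ := by
        simp [Finset.sum_const, Finset.card_univ]; ring

/-- A positive definite real matrix has a positive quadratic-form lower bound. -/
lemma posdef_quadratic_lower {n : ℕ} (hn : 1 ≤ n) (M : Matrix (Fin n) (Fin n) ℝ)
    (hM : M.PosDef) : ∃ μ > (0:ℝ), ∀ x : Fin n → ℝ, μ * ‖x‖ ^ 2 ≤ x ⬝ᵥ M.mulVec x := by
  haveI : Nonempty (Fin n) := ⟨⟨0, hn⟩⟩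
  have hcont : Continuous fun x : Fin n → ℝ => x ⬝ᵥ M.mulVec x := by
    simp only [dotProduct, mulVec]
    exact continuous_finset_sum _ fun i _ =>
      (continuous_apply i).mul (continuous_finset_sum _ fun j _ =>
        continuous_const.mul (continuous_apply j))
  have hne : (Metric.sphere (0 : Fin n → ℝ) 1).Nonempty :=
    NormedSpace.sphere_nonempty.mpr zero_le_one
  obtain ⟨z, hz, hmin⟩ :=
    (isCompact_sphere (0 : Fin n → ℝ) 1).exists_isMinOn hne hcont.continuousOn
  have hznorm : ‖z‖ = 1 := by simpa using mem_sphere_zero_iff_norm.mp hz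
  have hzne : z ≠ 0 := fun h => by simp [h] at hznorm
  refine ⟨z ⬝ᵥ M.mulVec z, by simpa using hM.dotProduct_mulVec_pos hzne, fun x => ?_⟩
  rcases eq_or_ne x 0 with rfl | hx
  · simp
  · have hxn : (0:ℝ) < ‖x‖ := norm_pos_iff.mpr hx
    set y : Fin n → ℝ := ‖x‖⁻¹ • x with hy
    have hyS : y ∈ Metric.sphere (0 : Fin n → ℝ) 1 := by
      simp [hy, norm_smul, abs_of_pos (inv_pos.mpr hxn), inv_mul_cancel₀ hxn.ne']
    have hxy : x = ‖x‖ • y := by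
      rw [hy, smul_smul, mul_inv_cancel₀ hxn.ne', one_smul]
    have hq : x ⬝ᵥ M.mulVec x = ‖x‖ ^ 2 * (y ⬝ᵥ M.mulVec y) := by
      conv_lhs => rw [hxy]
      rw [mulVec_smul, smul_dotProduct, dotProduct_smul, smul_eq_mul, smul_eq_mul]
      ring
    have hge : z ⬝ᵥ M.mulVec z ≤ y ⬝ᵥ M.mulVec y := hmin hyS
    rw [hq]
    nlinarith [sq_nonneg ‖x‖, hxn]

lemma div_rearrange_aux (a c b d : ℝ) (hc : c ≠ 0) (hb : b ≠ 0) (hd : d ≠ 0) :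
    (a / c) / (b * d) = 1 / (c * b) * (a / d) := by
  field_simp

/-- The summability claim (eq:3) in the proof of Theorem 5.6: for the
preconditioned Fletcher–Reeves nonlinear CG iteration with `E` bounded below,
`∇E` Lipschitz, and strong Wolfe step lengths with `0 < c₁ < c₂ < 1/2`,
`∑ₖ ‖g⁽ᵏ⁾‖⁴_{M⁻¹}/‖p⁽ᵏ⁾‖²_M < ∞`. -/
theorem pcg_grad_fourth_power_summable
    (n : ℕ) (hn : 1 ≤ n)
    (E : (Fin n → ℝ) → ℝ) (gradE : (Fin n → ℝ) → (Fin n → ℝ))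
    (hdiff : Differentiable ℝ E)
    (hgrad : ∀ x v, fderiv ℝ E x v = gradE x ⬝ᵥ v)
    (B : ℝ) (hbdd : ∀ x, B ≤ E x)
    (C : ℝ) (hC : 0 < C)
    (hLip : ∀ x y, ‖gradE y - gradE x‖ ≤ C * ‖y - x‖)
    (M : Matrix (Fin n) (Fin n) ℝ) (hM : M.PosDef)
    (f p : ℕ → (Fin n → ℝ)) (α : ℕ → ℝ)
    (c₁ c₂ : ℝ) (hc₁ : 0 < c₁) (hc₁₂ : c₁ < c₂) (hc₂ : c₂ < 1 / 2)
    (hgne : ∀ k, gradE (f k) ≠ 0)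
    (hα : ∀ k, 0 < α k)
    (hp0 : p 0 = -(M⁻¹.mulVec (gradE (f 0))))
    (hf : ∀ k, f (k + 1) = f k + α k • p k)
    (hpk : ∀ k, p (k + 1) =
      -(M⁻¹.mulVec (gradE (f (k + 1)))) +
        ((gradE (f (k + 1)) ⬝ᵥ M⁻¹.mulVec (gradE (f (k + 1)))) /
          (gradE (f k) ⬝ᵥ M⁻¹.mulVec (gradE (f k)))) • p k)
    (hWolfe1 : ∀ k, E (f k + α k • p k) ≤ E (f k) + c₁ * α k * (gradE (f k) ⬝ᵥ p k))
    (hWolfe2 : ∀ k, |gradE (f k + α k • p k) ⬝ᵥ p k| ≤ c₂ * |gradE (f k) ⬝ᵥ p k|) :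
    Summable (fun k : ℕ =>
      (gradE (f k) ⬝ᵥ M⁻¹.mulVec (gradE (f k))) ^ 2 / (p k ⬝ᵥ M.mulVec (p k))) := by
  have hc₂pos : (0:ℝ) < c₂ := hc₁.trans hc₁₂
  have h1c₂ : (0:ℝ) < 1 - c₂ := by linarith
  set σ : ℝ := (1 - 2 * c₂) / (1 - c₂) with hσdef
  have hσpos : 0 < σ := div_pos (by linarith) h1c₂
  set g : ℕ → (Fin n → ℝ) := fun k => gradE (f k) with hg
  set G : ℕ → ℝ := fun k => g k ⬝ᵥ M⁻¹.mulVec (g k) with hG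
  set D : ℕ → ℝ := fun k => g k ⬝ᵥ p k with hD
  -- positivity of G
  have hMinv : M⁻¹.PosDef := hM.inv
  have hGpos : ∀ k, 0 < G k := fun k => by
    simpa [hG, star_trivial] using hMinv.dotProduct_mulVec_pos (hgne k)
  -- recursion for D
  have hDrec : ∀ k, D (k + 1) = -G (k + 1) + (G (k + 1) / G k) * (g (k + 1) ⬝ᵥ p k) := by
    intro k
    simp only [hD, hG, hg]
    rw [hpk k]
    simp [dotProduct_add, dotProduct_neg, dotProduct_smul, smul_eq_mul]
  -- Wolfe 2 restated
  have hW2 : ∀ k, |g (k + 1) ⬝ᵥ p k| ≤ c₂ * |D k| := by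
    intro k
    have := hWolfe2 k
    rwa [← hf k] at this
  -- key induction: descent bounds
  have key : ∀ k, D k ≤ -(σ * G k) ∧ -D k ≤ G k / (1 - c₂) := by
    intro k
    induction k with
    | zero =>
      have h0 : D 0 = -G 0 := by
        simp only [hD, hG, hg, hp0]
        simp [dotProduct_neg]
      have hG0 := hGpos 0
      constructor
      · rw [h0, hσdef]
        rw [neg_le_neg_iff, div_mul_eq_mul_div, div_le_iff₀ h1c₂]
        nlinarith
      · rw [h0, neg_neg, le_div_iff₀ h1c₂]
        nlinarith
    | succ k ih =>
      obtain ⟨ih1, ih2⟩ := ih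
      have hGk := hGpos k
      have hGk1 := hGpos (k + 1)
      have hDneg : D k < 0 := lt_of_le_of_lt ih1 (by nlinarith)
      have habs : |D k| = -D k := abs_of_neg hDneg
      have hu : |g (k + 1) ⬝ᵥ p k| ≤ c₂ * (G k / (1 - c₂)) := by
        calc |g (k + 1) ⬝ᵥ p k| ≤ c₂ * |D k| := hW2 k
          _ = c₂ * (-D k) := by rw [habs]
          _ ≤ c₂ * (G k / (1 - c₂)) := by
              exact mul_le_mul_of_nonneg_left ih2 hc₂pos.le
      set u : ℝ := g (k + 1) ⬝ᵥ p k with hudef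
      have hub : (G (k + 1) / G k) * u ≤ c₂ * G (k + 1) / (1 - c₂) := by
        have h1 : u ≤ c₂ * (G k / (1 - c₂)) := (abs_le.mp hu).2
        have h2 : (G (k + 1) / G k) * u ≤ (G (k + 1) / G k) * (c₂ * (G k / (1 - c₂))) :=
          mul_le_mul_of_nonneg_left h1 (div_pos hGk1 hGk).le
        calc (G (k + 1) / G k) * u ≤ (G (k + 1) / G k) * (c₂ * (G k / (1 - c₂))) := h2
          _ = c₂ * G (k + 1) / (1 - c₂) := by
              field_simp
      have hlb : -(c₂ * G (k + 1) / (1 - c₂)) ≤ (G (k + 1) / G k) * u := by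
        have h1 : -(c₂ * (G k / (1 - c₂))) ≤ u := (abs_le.mp hu).1
        have h2 : (G (k + 1) / G k) * (-(c₂ * (G k / (1 - c₂)))) ≤ (G (k + 1) / G k) * u :=
          mul_le_mul_of_nonneg_left h1 (div_pos hGk1 hGk).le
        calc -(c₂ * G (k + 1) / (1 - c₂)) = (G (k + 1) / G k) * (-(c₂ * (G k / (1 - c₂)))) := by
              field_simp
          _ ≤ (G (k + 1) / G k) * u := h2
      constructor
      · rw [hDrec k, ← hudef]
        have : -(σ * G (k + 1)) = -G (k + 1) + c₂ * G (k + 1) / (1 - c₂) := by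
          rw [hσdef]; field_simp; ring
        rw [this]
        linarith
      · rw [hDrec k, ← hudef]
        have : G (k + 1) / (1 - c₂) = G (k + 1) + c₂ * G (k + 1) / (1 - c₂) := by
          field_simp; ring
        rw [this]
        linarith
  have hDneg : ∀ k, D k < 0 := fun k =>
    lt_of_le_of_lt (key k).1 (by nlinarith [hGpos k, hσpos])
  have hpne : ∀ k, p k ≠ 0 := by
    intro k hpk0
    have : D k = 0 := by simp [hD, hpk0]
    exact absurd this (hDneg k).ne
  have hNpos : ∀ k, (0:ℝ) < ‖p k‖ := fun k => norm_pos_iff.mpr (hpne k)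
  -- Zoutendijk: lower bound on α
  have hplow : ∀ k, (1 - c₂) * (-D k) ≤ (n : ℝ) * C * α k * ‖p k‖ ^ 2 := by
    intro k
    have h1 : c₂ * D k ≤ g (k + 1) ⬝ᵥ p k := by
      have := (abs_le.mp (hW2 k)).1
      rw [abs_of_neg (hDneg k)] at this
      linarith
    have h2 : (g (k + 1) - g k) ⬝ᵥ p k ≤ (n : ℝ) * ‖g (k + 1) - g k‖ * ‖p k‖ :=
      dot_le_card_norm _ _
    have h3 : ‖g (k + 1) - g k‖ ≤ C * (α k * ‖p k‖) := by
      have h := hLip (f k) (f k + α k • p k)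
      simp only [hg, hf k]
      calc ‖gradE (f k + α k • p k) - gradE (f k)‖ ≤ C * ‖f k + α k • p k - f k‖ := h
        _ = C * (α k * ‖p k‖) := by
            rw [add_sub_cancel_left, norm_smul, Real.norm_eq_abs, abs_of_pos (hα k)]
    have h4 : (g (k + 1) - g k) ⬝ᵥ p k = (g (k + 1) ⬝ᵥ p k) - D k := by
      simp [hD, sub_dotProduct]
    have h5 : (g (k + 1) ⬝ᵥ p k) - D k ≤ (n : ℝ) * (C * (α k * ‖p k‖)) * ‖p k‖ := by
      rw [← h4]
      calc (g (k + 1) - g k) ⬝ᵥ p k ≤ (n : ℝ) * ‖g (k + 1) - g k‖ * ‖p k‖ := h2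
        _ ≤ (n : ℝ) * (C * (α k * ‖p k‖)) * ‖p k‖ := by
            have hn0 : (0:ℝ) ≤ (n : ℝ) := Nat.cast_nonneg n
            have := mul_le_mul_of_nonneg_left h3 hn0
            exact mul_le_mul_of_nonneg_right this (norm_nonneg _)
    nlinarith [h1, h5]
  -- energy decrease
  set S : ℕ → ℝ := fun k => D k ^ 2 / ‖p k‖ ^ 2 with hSdef
  set κ : ℝ := c₁ * (1 - c₂) / ((n : ℝ) * C) with hκdef
  have hnpos : (0:ℝ) < (n : ℝ) := by exact_mod_cast hn
  have hκpos : 0 < κ := div_pos (mul_pos hc₁ h1c₂) (mul_pos hnpos hC)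
  have hSnonneg : ∀ k, 0 ≤ S k := fun k => div_nonneg (sq_nonneg _) (sq_nonneg _)
  have hdec : ∀ k, κ * S k ≤ E (f k) - E (f (k + 1)) := by
    intro k
    have hW1 : E (f (k + 1)) ≤ E (f k) + c₁ * α k * D k := by
      rw [hf k]; exact hWolfe1 k
    have hNk := hNpos k
    have hstep : κ * S k ≤ c₁ * α k * (-D k) := by
      rw [hSdef, hκdef]
      rw [show c₁ * (1 - c₂) / ((n:ℝ) * C) * (D k ^ 2 / ‖p k‖ ^ 2)
            = (c₁ * (1 - c₂) * D k ^ 2) / ((n:ℝ) * C * ‖p k‖ ^ 2) by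
          field_simp]
      rw [div_le_iff₀ (by positivity)]
      have h6 := mul_le_mul_of_nonneg_left (hplow k) (mul_pos hc₁ (neg_pos.mpr (hDneg k))).le
      nlinarith [h6]
    linarith
  -- partial sums bounded
  have hpartial : ∀ N : ℕ, ∑ k ∈ Finset.range N, κ * S k ≤ E (f 0) - B := by
    intro N
    have htel : ∑ k ∈ Finset.range N, κ * S k ≤ E (f 0) - E (f N) := by
      induction N with
      | zero => simp
      | succ N ihN =>
        rw [Finset.sum_range_succ]
        have := hdec N
        linarith
    have := hbdd (f N)
    linarith
  have hsumS : Summable (fun k => κ * S k) :=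
    summable_of_sum_range_le (fun k => mul_nonneg hκpos.le (hSnonneg k)) hpartial
  have hsumS' : Summable S := by
    have := hsumS.mul_left κ⁻¹
    simpa [← mul_assoc, inv_mul_cancel₀ hκpos.ne'] using this
  -- quadratic lower bound for M
  obtain ⟨μ, hμpos, hμ⟩ := posdef_quadratic_lower hn M hM
  -- comparison
  apply Summable.of_nonneg_of_le
    (fun k => ?_) (fun k => ?_) (hsumS'.mul_left (1 / (σ ^ 2 * μ)))
  · have hPpos : 0 < p k ⬝ᵥ M.mulVec (p k) := by
      simpa [star_trivial] using hM.dotProduct_mulVec_pos (hpne k)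
    exact div_nonneg (sq_nonneg _) hPpos.le
  · have hPk : μ * ‖p k‖ ^ 2 ≤ p k ⬝ᵥ M.mulVec (p k) := hμ (p k)
    have hμNpos : 0 < μ * ‖p k‖ ^ 2 := mul_pos hμpos (pow_pos (hNpos k) 2)
    have hGD : G k ^ 2 ≤ D k ^ 2 / σ ^ 2 := by
      have h1 : σ * G k ≤ -D k := by linarith [(key k).1]
      have h2 : 0 ≤ σ * G k := mul_nonneg hσpos.le (hGpos k).le
      have h3 : (σ * G k) ^ 2 ≤ (-D k) ^ 2 := pow_le_pow_left₀ h2 h1 2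
      rw [le_div_iff₀ (pow_pos hσpos 2)]
      calc G k ^ 2 * σ ^ 2 = (σ * G k) ^ 2 := by ring
        _ ≤ (-D k) ^ 2 := h3
        _ = D k ^ 2 := by ring
    have hcmp : G k ^ 2 / (p k ⬝ᵥ M.mulVec (p k)) ≤ (D k ^ 2 / σ ^ 2) / (μ * ‖p k‖ ^ 2) :=
      div_le_div₀ (div_nonneg (sq_nonneg _) (sq_nonneg _)) hGD hμNpos hPk
    refine le_trans hcmp (le_of_eq ?_)
    simp only [hSdef]
    exact div_rearrange_aux _ _ _ _ (pow_ne_zero 2 hσpos.ne') hμpos.ne'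
      (pow_ne_zero 2 (hNpos k).ne')
end

section
/- Consider the preconditioned Fletcher–Reeves nonlinear CG iteration for a differentiable E : ℝⁿ → ℝ with symmetric positive definite preconditioner M, with nonzero gradients g^(k) = ∇E(f^(k)) at every iterate, and suppose every step length α_k satisfies the strong Wolfe conditions with constants 0 < c₁ < c₂ < 1/2. Then for all k ≥ 0, ‖p^(k)‖²_M ≤ ((1 + c₂)/(1 − c₂)) · ‖g^(k)‖⁴_{M⁻¹} · Σ_{i=0}^{k} 1/‖g^(i)‖²_{M⁻¹}. -/
open Matrix

/-- The bound (4.31) on the M-norm of the Fletcher–Reeves search direction in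
the proof of Theorem 5.6:
`‖p⁽ᵏ⁾‖²_M ≤ ((1+c₂)/(1−c₂))·‖g⁽ᵏ⁾‖⁴_{M⁻¹}·∑_{i=0}^{k} 1/‖g⁽ⁱ⁾‖²_{M⁻¹}`. -/
theorem pcg_direction_norm_bound
    (n : ℕ) (hn : 1 ≤ n)
    (E : (Fin n → ℝ) → ℝ) (gradE : (Fin n → ℝ) → (Fin n → ℝ))
    (hdiff : Differentiable ℝ E)
    (hgrad : ∀ x v, fderiv ℝ E x v = gradE x ⬝ᵥ v)
    (M : Matrix (Fin n) (Fin n) ℝ) (hM : M.PosDef)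
    (f p : ℕ → (Fin n → ℝ)) (α : ℕ → ℝ)
    (c₁ c₂ : ℝ) (hc₁ : 0 < c₁) (hc₁₂ : c₁ < c₂) (hc₂ : c₂ < 1 / 2)
    (hgne : ∀ k, gradE (f k) ≠ 0)
    (hα : ∀ k, 0 < α k)
    (hp0 : p 0 = -(M⁻¹.mulVec (gradE (f 0))))
    (hf : ∀ k, f (k + 1) = f k + α k • p k)
    (hpk : ∀ k, p (k + 1) =
      -(M⁻¹.mulVec (gradE (f (k + 1)))) +
        ((gradE (f (k + 1)) ⬝ᵥ M⁻¹.mulVec (gradE (f (k + 1)))) /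
          (gradE (f k) ⬝ᵥ M⁻¹.mulVec (gradE (f k)))) • p k)
    (hWolfe1 : ∀ k, E (f k + α k • p k) ≤ E (f k) + c₁ * α k * (gradE (f k) ⬝ᵥ p k))
    (hWolfe2 : ∀ k, |gradE (f k + α k • p k) ⬝ᵥ p k| ≤ c₂ * |gradE (f k) ⬝ᵥ p k|) :
    ∀ k, p k ⬝ᵥ M.mulVec (p k) ≤
      ((1 + c₂) / (1 - c₂)) * (gradE (f k) ⬝ᵥ M⁻¹.mulVec (gradE (f k))) ^ 2 *
        ∑ i ∈ Finset.range (k + 1), 1 / (gradE (f i) ⬝ᵥ M⁻¹.mulVec (gradE (f i))) := by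
  have hc2pos : 0 < c₂ := hc₁.trans hc₁₂
  have h1c2 : 0 < 1 - c₂ := by linarith
  have hMinv : (M⁻¹).PosDef := hM.inv
  have hdet : IsUnit M.det := isUnit_iff_ne_zero.mpr hM.det_pos.ne'
  have hMM : M * M⁻¹ = 1 := Matrix.mul_nonsing_inv M hdet
  have hMT : Mᵀ = M := by
    ext i j
    have := congrFun (congrFun hM.1 i) j
    simpa using this
  set g : ℕ → (Fin n → ℝ) := fun k => gradE (f k) with hgdef
  set γ : ℕ → ℝ := fun k => g k ⬝ᵥ M⁻¹.mulVec (g k) with hγdef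
  have hγpos : ∀ k, 0 < γ k := by
    intro k
    have := hMinv.re_dotProduct_pos (hgne k)
    simpa [hγdef, hgdef] using this
  -- key identities
  have key2 : ∀ x y : Fin n → ℝ, x ⬝ᵥ M *ᵥ (M⁻¹ *ᵥ y) = x ⬝ᵥ y := by
    intro x y
    rw [Matrix.mulVec_mulVec, hMM, Matrix.one_mulVec]
  have key1 : ∀ x y : Fin n → ℝ, (M⁻¹ *ᵥ x) ⬝ᵥ M *ᵥ y = x ⬝ᵥ y := by
    intro x y
    rw [Matrix.dotProduct_mulVec, ← Matrix.mulVec_transpose, hMT,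
      Matrix.mulVec_mulVec, hMM, Matrix.one_mulVec]
  -- strong Wolfe curvature, rewritten
  have hW2 : ∀ k, |g (k + 1) ⬝ᵥ p k| ≤ c₂ * |g k ⬝ᵥ p k| := by
    intro k
    have := hWolfe2 k
    rw [← hf k] at this
    exact this
  -- expansion of g(k+1) ⬝ p(k+1)
  have hgp_succ : ∀ k, g (k + 1) ⬝ᵥ p (k + 1)
      = -γ (k + 1) + (γ (k + 1) / γ k) * (g (k + 1) ⬝ᵥ p k) := by
    intro k
    rw [hpk k]
    simp only [dotProduct_add, dotProduct_neg, dotProduct_smul, smul_eq_mul]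
    rfl
  -- Lemma (Al-Baali type): |gₖᵀpₖ| ≤ γₖ/(1-c₂)
  have hB : ∀ k, |g k ⬝ᵥ p k| ≤ γ k / (1 - c₂) := by
    intro k
    induction k with
    | zero =>
      have : g 0 ⬝ᵥ p 0 = -γ 0 := by
        rw [hp0]; simp [hγdef, hgdef]
      rw [this, abs_neg, abs_of_pos (hγpos 0)]
      rw [le_div_iff₀ h1c2]
      nlinarith [hγpos 0]
    | succ k ih =>
      have hβpos : 0 < γ (k + 1) / γ k := div_pos (hγpos (k + 1)) (hγpos k)
      calc |g (k + 1) ⬝ᵥ p (k + 1)|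
          = |-γ (k + 1) + (γ (k + 1) / γ k) * (g (k + 1) ⬝ᵥ p k)| := by rw [hgp_succ k]
        _ ≤ |-γ (k + 1)| + |(γ (k + 1) / γ k) * (g (k + 1) ⬝ᵥ p k)| := abs_add_le _ _
        _ = γ (k + 1) + (γ (k + 1) / γ k) * |g (k + 1) ⬝ᵥ p k| := by
            rw [abs_neg, abs_of_pos (hγpos (k + 1)), abs_mul, abs_of_pos hβpos]
        _ ≤ γ (k + 1) + (γ (k + 1) / γ k) * (c₂ * (γ k / (1 - c₂))) := by
            have h1 : |g (k + 1) ⬝ᵥ p k| ≤ c₂ * (γ k / (1 - c₂)) :=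
              (hW2 k).trans (by nlinarith [ih])
            nlinarith [hβpos, h1]
        _ = γ (k + 1) / (1 - c₂) := by
            field_simp [(hγpos k).ne', h1c2.ne']
            ring
  -- expansion of the M-norm of p(k+1)
  have hexp : ∀ k, p (k + 1) ⬝ᵥ M *ᵥ p (k + 1)
      = γ (k + 1) - 2 * (γ (k + 1) / γ k) * (g (k + 1) ⬝ᵥ p k)
        + (γ (k + 1) / γ k) ^ 2 * (p k ⬝ᵥ M *ᵥ p k) := by
    intro k
    rw [hpk k]
    set β := γ (k + 1) / γ k
    set u := M⁻¹ *ᵥ g (k + 1)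
    have h1 : (-u + β • p k) ⬝ᵥ M *ᵥ (-u + β • p k)
        = u ⬝ᵥ M *ᵥ u - β * (u ⬝ᵥ M *ᵥ p k) - β * (p k ⬝ᵥ M *ᵥ u)
          + β * (β * (p k ⬝ᵥ M *ᵥ p k)) := by
      rw [Matrix.mulVec_add, Matrix.mulVec_neg, Matrix.mulVec_smul]
      simp only [add_dotProduct, dotProduct_add, neg_dotProduct, dotProduct_neg,
        smul_dotProduct, dotProduct_smul, smul_eq_mul, neg_neg]
      ring
    have h2 : u ⬝ᵥ M *ᵥ u = γ (k + 1) := by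
      show (M⁻¹ *ᵥ g (k + 1)) ⬝ᵥ M *ᵥ u = _
      rw [key1]
    have h3 : u ⬝ᵥ M *ᵥ p k = g (k + 1) ⬝ᵥ p k := key1 _ _
    have h4 : p k ⬝ᵥ M *ᵥ u = g (k + 1) ⬝ᵥ p k := by
      rw [key2, dotProduct_comm]
    rw [show (-(M⁻¹.mulVec (gradE (f (k + 1)))) +
        ((gradE (f (k + 1)) ⬝ᵥ M⁻¹.mulVec (gradE (f (k + 1)))) /
          (gradE (f k) ⬝ᵥ M⁻¹.mulVec (gradE (f k)))) • p k) = -u + β • p k from rfl]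
    rw [h1, h2, h3, h4]
    ring
  -- arithmetic helper
  have key_arith : ∀ a b s : ℝ, a ≠ 0 → b ≠ 0 →
      b + 2 * (b / a) * (c₂ * (a / (1 - c₂))) + (b / a) ^ 2 * ((1 + c₂) / (1 - c₂) * a ^ 2 * s)
        = (1 + c₂) / (1 - c₂) * b ^ 2 * (s + 1 / b) := by
    intro a b s ha hb
    field_simp
    ring
  -- main induction
  intro k
  induction k with
  | zero =>
    have hbase : p 0 ⬝ᵥ M *ᵥ p 0 = γ 0 := by
      rw [hp0]
      rw [Matrix.mulVec_neg]
      simp only [neg_dotProduct, dotProduct_neg, neg_neg]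
      rw [key1]
    rw [show ((0:ℕ) + 1) = 1 from rfl, Finset.sum_range_one]
    have heq0 : ((1 + c₂) / (1 - c₂)) * γ 0 ^ 2 * (1 / γ 0) = ((1 + c₂) / (1 - c₂)) * γ 0 := by
      field_simp [(hγpos 0).ne', h1c2.ne']
    show p 0 ⬝ᵥ M *ᵥ p 0 ≤ ((1 + c₂) / (1 - c₂)) * γ 0 ^ 2 * (1 / γ 0)
    rw [heq0, hbase]
    have hC1 : 1 ≤ (1 + c₂) / (1 - c₂) := by
      rw [le_div_iff₀ h1c2]; linarith
    nlinarith [hγpos 0, hC1]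
  | succ k ih =>
    set C := (1 + c₂) / (1 - c₂) with hCdef
    set S := ∑ i ∈ Finset.range (k + 1), 1 / γ i with hSdef
    have hSnn : 0 ≤ S := Finset.sum_nonneg fun i _ => (one_div_pos.mpr (hγpos i)).le
    have ihM : p k ⬝ᵥ M *ᵥ p k ≤ C * γ k ^ 2 * S := ih
    set β := γ (k + 1) / γ k with hβdef
    have hβpos : 0 < β := div_pos (hγpos (k + 1)) (hγpos k)
    have hcross : -(2 * β * (g (k + 1) ⬝ᵥ p k)) ≤ 2 * β * (c₂ * (γ k / (1 - c₂))) := by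
      have h1 : |g (k + 1) ⬝ᵥ p k| ≤ c₂ * (γ k / (1 - c₂)) :=
        (hW2 k).trans (by nlinarith [hB k])
      have h2 : -(g (k + 1) ⬝ᵥ p k) ≤ c₂ * (γ k / (1 - c₂)) :=
        (neg_le_abs _).trans h1
      nlinarith [hβpos]
    have hq : p (k + 1) ⬝ᵥ M *ᵥ p (k + 1)
        ≤ γ (k + 1) + 2 * β * (c₂ * (γ k / (1 - c₂))) + β ^ 2 * (C * γ k ^ 2 * S) := by
      rw [hexp k]
      have := mul_le_mul_of_nonneg_left ihM (sq_nonneg β)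
      nlinarith [hcross, this]
    have heq : γ (k + 1) + 2 * β * (c₂ * (γ k / (1 - c₂))) + β ^ 2 * (C * γ k ^ 2 * S)
        = C * γ (k + 1) ^ 2 * (S + 1 / γ (k + 1)) := by
      rw [hβdef, hCdef]
      exact key_arith (γ k) (γ (k + 1)) S (hγpos k).ne' (hγpos (k + 1)).ne'
    calc p (k + 1) ⬝ᵥ M *ᵥ p (k + 1)
        ≤ C * γ (k + 1) ^ 2 * (S + 1 / γ (k + 1)) := by rw [← heq]; exact hq
      _ = C * γ (k + 1) ^ 2 * ∑ i ∈ Finset.range (k + 1 + 1), 1 / γ i := by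
          rw [Finset.sum_range_succ]
end

section
/- Consider the preconditioned Fletcher–Reeves nonlinear CG iteration for a differentiable E : ℝⁿ → ℝ with symmetric positive definite preconditioner M, with nonzero gradients g^(k) = ∇E(f^(k)) at every iterate. Assume E is bounded below on ℝⁿ, ∇E is Lipschitz continuous on ℝⁿ, there exists γ̄ > 0 with ‖g^(k)‖_{M⁻¹} ≤ γ̄ for all k, and every step length α_k satisfies the strong Wolfe conditions with constants 0 < c₁ < c₂ < 1/2. Then liminf_{k→∞} ‖g^(k)‖_{M⁻¹} = 0, i.e., liminf_{k→∞} sqrt(g^(k)ᵀ M⁻¹ g^(k)) = 0. -/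
open Matrix Finset Filter


lemma quad_upper {n : ℕ} (A : Matrix (Fin n) (Fin n) ℝ) :
    ∃ c : ℝ, 0 < c ∧ ∀ v : Fin n → ℝ, v ⬝ᵥ A.mulVec v ≤ c * (v ⬝ᵥ v) := by
  refine ⟨(∑ i, ∑ j, |A i j|) + 1, by positivity, fun v => ?_⟩
  have hS : 0 ≤ v ⬝ᵥ v := by
    simp only [dotProduct]
    exact Finset.sum_nonneg fun i _ => mul_self_nonneg _
  have hsq : ∀ i : Fin n, v i * v i ≤ v ⬝ᵥ v := fun i =>
    Finset.single_le_sum (f := fun k => v k * v k) (fun k _ => mul_self_nonneg _) (mem_univ i)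
  have key : v ⬝ᵥ A.mulVec v ≤ (∑ i, ∑ j, |A i j|) * (v ⬝ᵥ v) := by
    have : v ⬝ᵥ A.mulVec v = ∑ i, ∑ j, v i * (A i j * v j) := by
      simp [dotProduct, Matrix.mulVec, Finset.mul_sum]
    rw [this, Finset.sum_mul]
    refine Finset.sum_le_sum fun i _ => ?_
    rw [Finset.sum_mul]
    refine Finset.sum_le_sum fun j _ => ?_
    have h1 : v i * (A i j * v j) ≤ |A i j| * (|v i| * |v j|) := by
      calc v i * (A i j * v j) ≤ |v i * (A i j * v j)| := le_abs_self _
      _ = |A i j| * (|v i| * |v j|) := by rw [abs_mul, abs_mul]; ring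
    refine h1.trans ?_
    have h2 : |v i| * |v j| ≤ v ⬝ᵥ v := by
      nlinarith [hsq i, hsq j, abs_nonneg (v i), abs_nonneg (v j), sq_abs (v i), sq_abs (v j)]
    exact mul_le_mul_of_nonneg_left h2 (abs_nonneg _)
  nlinarith [key]

section
variable {n : ℕ} {M : Matrix (Fin n) (Fin n) ℝ}

lemma Msymm (hM : M.PosDef) : Mᵀ = M := by
  have := hM.isHermitian
  rwa [Matrix.IsHermitian, conjTranspose_eq_transpose_of_trivial] at this

lemma MinvM (hM : M.PosDef) : M * M⁻¹ = 1 :=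
  Matrix.mul_nonsing_inv M (isUnit_iff_ne_zero.mpr hM.det_pos.ne')

lemma dot_inv_M (hM : M.PosDef) (a b : Fin n → ℝ) :
    (M⁻¹.mulVec a) ⬝ᵥ (M.mulVec b) = a ⬝ᵥ b := by
  rw [Matrix.dotProduct_mulVec, ← Matrix.mulVec_transpose, Msymm hM,
    Matrix.mulVec_mulVec, MinvM hM, Matrix.one_mulVec]

-- positivity of quadratic form over ℝ
lemma posdef_dot (hM : M.PosDef) {v : Fin n → ℝ} (hv : v ≠ 0) :
    0 < v ⬝ᵥ M.mulVec v := by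
  have := hM.dotProduct_mulVec_pos hv
  simpa using this
end

lemma gen_cs {n : ℕ} {M : Matrix (Fin n) (Fin n) ℝ} (hM : M.PosDef) (p : Fin n → ℝ) :
    (p ⬝ᵥ p) ^ 2 ≤ (p ⬝ᵥ M⁻¹.mulVec p) * (p ⬝ᵥ M.mulVec p) := by
  by_cases hp : p = 0
  · simp [hp]
  · set q : ℝ := p ⬝ᵥ p with hq
    set m : ℝ := p ⬝ᵥ M.mulVec p with hm
    have hmpos : 0 < m := posdef_dot hM hp
    set t : ℝ := q / m with ht
    set w : (Fin n → ℝ) := M⁻¹.mulVec p with hw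
    set u : (Fin n → ℝ) := t • p - w with hu
    have hMw : M.mulVec w = p := by
      rw [hw, Matrix.mulVec_mulVec, MinvM hM, Matrix.one_mulVec]
    have hwMp : w ⬝ᵥ M.mulVec p = q := by
      rw [hw, dot_inv_M hM]
    have hwMw : w ⬝ᵥ M.mulVec w = p ⬝ᵥ w := by
      rw [hw, dot_inv_M hM]
    have hnn : 0 ≤ u ⬝ᵥ M.mulVec u := by
      by_cases hu0 : u = 0
      · simp [hu0]
      · exact (posdef_dot hM hu0).le
    have expand : u ⬝ᵥ M.mulVec u = t^2 * m - 2 * t * q + p ⬝ᵥ w := by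
      rw [hu, Matrix.mulVec_sub, Matrix.mulVec_smul, sub_dotProduct, dotProduct_sub,
        dotProduct_sub, smul_dotProduct, smul_dotProduct, dotProduct_smul, dotProduct_smul,
        hMw, hwMp]
      rw [dotProduct_comm w p, ← hq, ← hm]
      simp only [smul_eq_mul]
      ring
    have key : 0 ≤ t^2 * m - 2 * t * q + p ⬝ᵥ w := expand ▸ hnn
    have hple : q^2 / m ≤ p ⬝ᵥ w := by
      rw [ht] at key
      have h1 : (q/m)^2 * m = q^2/m := by field_simp
      have h2 : (q/m) * q = q^2/m := by field_simp
      linarith [key]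
    calc q ^ 2 = q^2/m * m := (div_mul_cancel₀ _ hmpos.ne').symm
    _ ≤ (p ⬝ᵥ w) * m := mul_le_mul_of_nonneg_right hple hmpos.le

lemma unif_lb (u : ℕ → ℝ) (hu : ∀ k, 0 < u k) :
    ∀ (K : ℕ) (c : ℝ), 0 < c → (∀ k, K ≤ k → c ≤ u k) → ∃ t, 0 < t ∧ ∀ k, t ≤ u k := by
  intro K
  induction K with
  | zero => exact fun c hc h => ⟨c, hc, fun k => h k (Nat.zero_le k)⟩
  | succ K ih =>
    intro c hc h
    refine ih (min c (u K)) (lt_min hc (hu K)) fun k hk => ?_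
    rcases eq_or_lt_of_le hk with heq | hlt
    · rw [← heq]; exact min_le_right _ _
    · exact le_trans (min_le_left _ _) (h k hlt)


lemma pinorm_le_sqrt_dot {n : ℕ} (b : Fin n → ℝ) : ‖b‖ ≤ Real.sqrt (b ⬝ᵥ b) := by
  have hq0 : (0:ℝ) ≤ b ⬝ᵥ b := Finset.sum_nonneg fun i _ => mul_self_nonneg _
  apply pi_norm_le_iff_of_nonneg (Real.sqrt_nonneg _) |>.mpr
  intro i
  rw [Real.norm_eq_abs, ← Real.sqrt_sq_eq_abs]
  apply Real.sqrt_le_sqrt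
  rw [sq]
  exact Finset.single_le_sum (f := fun j => b j * b j) (fun j _ => mul_self_nonneg _) (mem_univ i)

lemma dot_le_sqrtn {n : ℕ} (a b : Fin n → ℝ) :
    a ⬝ᵥ b ≤ Real.sqrt n * ‖a‖ * Real.sqrt (b ⬝ᵥ b) := by
  have hbb : (0:ℝ) ≤ b ⬝ᵥ b := Finset.sum_nonneg fun i _ => mul_self_nonneg _
  have haa : (0:ℝ) ≤ a ⬝ᵥ a := Finset.sum_nonneg fun i _ => mul_self_nonneg _
  have hcs : (a ⬝ᵥ b)^2 ≤ (a ⬝ᵥ a) * (b ⬝ᵥ b) := by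
    have := Finset.sum_mul_sq_le_sq_mul_sq Finset.univ a b
    simpa [dotProduct, sq] using this
  have h1 : a ⬝ᵥ b ≤ Real.sqrt (a ⬝ᵥ a) * Real.sqrt (b ⬝ᵥ b) := by
    calc a ⬝ᵥ b ≤ |a ⬝ᵥ b| := le_abs_self _
    _ = Real.sqrt ((a ⬝ᵥ b)^2) := (Real.sqrt_sq_eq_abs _).symm
    _ ≤ Real.sqrt ((a ⬝ᵥ a) * (b ⬝ᵥ b)) := Real.sqrt_le_sqrt hcs
    _ = Real.sqrt (a ⬝ᵥ a) * Real.sqrt (b ⬝ᵥ b) := Real.sqrt_mul haa _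
  have h2 : Real.sqrt (a ⬝ᵥ a) ≤ Real.sqrt n * ‖a‖ := by
    have hle : a ⬝ᵥ a ≤ (n : ℝ) * ‖a‖^2 := by
      have : ∀ i : Fin n, a i * a i ≤ ‖a‖^2 := by
        intro i
        have h3 : |a i| ≤ ‖a‖ := by
          rw [← Real.norm_eq_abs]; exact norm_le_pi_norm a i
        nlinarith [abs_nonneg (a i), le_abs_self (a i), neg_abs_le (a i)]
      calc a ⬝ᵥ a = ∑ i, a i * a i := rfl
      _ ≤ ∑ _i : Fin n, ‖a‖^2 := Finset.sum_le_sum fun i _ => this i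
      _ = (n : ℝ) * ‖a‖^2 := by simp [Finset.sum_const, mul_comm]
    calc Real.sqrt (a ⬝ᵥ a) ≤ Real.sqrt ((n:ℝ) * ‖a‖^2) := Real.sqrt_le_sqrt hle
    _ = Real.sqrt n * ‖a‖ := by
        rw [Real.sqrt_mul (Nat.cast_nonneg n), Real.sqrt_sq (norm_nonneg a)]
  calc a ⬝ᵥ b ≤ Real.sqrt (a ⬝ᵥ a) * Real.sqrt (b ⬝ᵥ b) := h1
  _ ≤ Real.sqrt n * ‖a‖ * Real.sqrt (b ⬝ᵥ b) :=
      mul_le_mul_of_nonneg_right h2 (Real.sqrt_nonneg _)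



set_option maxHeartbeats 1000000 in
/-- Theorem 5.6 (global convergence of the IEM algorithm): for the
preconditioned Fletcher–Reeves nonlinear CG iteration with `E` bounded below,
`∇E` Lipschitz, the `M⁻¹`-norms of the gradients bounded by `γ̄`, and strong
Wolfe step lengths with `0 < c₁ < c₂ < 1/2`,
`liminf_{k→∞} ‖g⁽ᵏ⁾‖_{M⁻¹} = 0`. -/
theorem pcg_global_convergence
    (n : ℕ) (hn : 1 ≤ n)
    (E : (Fin n → ℝ) → ℝ) (gradE : (Fin n → ℝ) → (Fin n → ℝ))
    (hdiff : Differentiable ℝ E)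
    (hgrad : ∀ x v, fderiv ℝ E x v = gradE x ⬝ᵥ v)
    (B : ℝ) (hbdd : ∀ x, B ≤ E x)
    (C : ℝ) (hC : 0 < C)
    (hLip : ∀ x y, ‖gradE y - gradE x‖ ≤ C * ‖y - x‖)
    (M : Matrix (Fin n) (Fin n) ℝ) (hM : M.PosDef)
    (f p : ℕ → (Fin n → ℝ)) (α : ℕ → ℝ)
    (c₁ c₂ : ℝ) (hc₁ : 0 < c₁) (hc₁₂ : c₁ < c₂) (hc₂ : c₂ < 1 / 2)
    (hgne : ∀ k, gradE (f k) ≠ 0)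
    (γbar : ℝ) (hγbar : 0 < γbar)
    (hgbd : ∀ k, Real.sqrt (gradE (f k) ⬝ᵥ M⁻¹.mulVec (gradE (f k))) ≤ γbar)
    (hα : ∀ k, 0 < α k)
    (hp0 : p 0 = -(M⁻¹.mulVec (gradE (f 0))))
    (hf : ∀ k, f (k + 1) = f k + α k • p k)
    (hpk : ∀ k, p (k + 1) =
      -(M⁻¹.mulVec (gradE (f (k + 1)))) +
        ((gradE (f (k + 1)) ⬝ᵥ M⁻¹.mulVec (gradE (f (k + 1)))) /
          (gradE (f k) ⬝ᵥ M⁻¹.mulVec (gradE (f k)))) • p k)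
    (hWolfe1 : ∀ k, E (f k + α k • p k) ≤ E (f k) + c₁ * α k * (gradE (f k) ⬝ᵥ p k))
    (hWolfe2 : ∀ k, |gradE (f k + α k • p k) ⬝ᵥ p k| ≤ c₂ * |gradE (f k) ⬝ᵥ p k|) :
    Filter.liminf
      (fun k : ℕ => Real.sqrt (gradE (f k) ⬝ᵥ M⁻¹.mulVec (gradE (f k))))
      Filter.atTop = 0 := by
  -- basic constants
  have hc₂0 : 0 < c₂ := lt_trans hc₁ hc₁₂
  have h1c₂ : 0 < 1 - c₂ := by linarith
  have h12c₂ : 0 < 1 - 2 * c₂ := by linarith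
  set g : ℕ → (Fin n → ℝ) := fun k => gradE (f k) with hgdef
  set T : ℕ → ℝ := fun k => g k ⬝ᵥ M⁻¹.mulVec (g k) with hTdef
  have hMinv : M⁻¹.PosDef := hM.inv
  have hT : ∀ k, 0 < T k := fun k => posdef_dot hMinv (hgne k)
  set c : ℝ := (1 - 2 * c₂) / (1 - c₂) with hcdef
  have hcpos : 0 < c := div_pos h12c₂ h1c₂
  -- step 1 : descent bounds (Al-Baali)
  have descent : ∀ k, g k ⬝ᵥ p k ≤ -(c * T k) ∧ -(T k / (1 - c₂)) ≤ g k ⬝ᵥ p k := by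
    intro k
    induction k with
    | zero =>
      have h0 : g 0 ⬝ᵥ p 0 = -(T 0) := by
        rw [hp0, dotProduct_neg]
      constructor
      · rw [h0]
        have hcle : c ≤ 1 := by rw [hcdef, div_le_one h1c₂]; linarith
        nlinarith [hT 0]
      · rw [h0]
        have h1 : T 0 ≤ T 0 / (1 - c₂) := by
          rw [le_div_iff₀ h1c₂]; nlinarith [hT 0]
        linarith
    | succ k ih =>
      have hneg : g k ⬝ᵥ p k < 0 := lt_of_le_of_lt ih.1 (by nlinarith [hT k, hcpos])
      have habs : |g k ⬝ᵥ p k| ≤ T k / (1 - c₂) := by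
        rw [abs_of_neg hneg]; linarith [ih.2]
      have hcross : |g (k+1) ⬝ᵥ p k| ≤ c₂ * (T k / (1 - c₂)) := by
        have h2 := hWolfe2 k
        rw [← hf k] at h2
        exact h2.trans (mul_le_mul_of_nonneg_left habs hc₂0.le)
      have hexp : g (k+1) ⬝ᵥ p (k+1) = -(T (k+1)) + (T (k+1) / T k) * (g (k+1) ⬝ᵥ p k) := by
        have hpk' := hpk k
        rw [hpk', dotProduct_add, dotProduct_neg, dotProduct_smul]
        rfl
      have hβpos : 0 < T (k+1) / T k := div_pos (hT (k+1)) (hT k)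
      have hβabs : (T (k+1) / T k) * |g (k+1) ⬝ᵥ p k| ≤ c₂ * T (k+1) / (1 - c₂) := by
        have h3 := mul_le_mul_of_nonneg_left hcross hβpos.le
        have h4 : (T (k+1) / T k) * (c₂ * (T k / (1 - c₂))) = c₂ * T (k+1) / (1 - c₂) := by
          field_simp [(hT k).ne']
        linarith [h3, h4.le]
      have hb : |(T (k+1) / T k) * (g (k+1) ⬝ᵥ p k)| ≤ c₂ * T (k+1) / (1 - c₂) := by
        rw [abs_mul, abs_of_pos hβpos]; exact hβabs
      have habs2 := abs_le.mp hb
      have e1 : -(T (k+1)) + c₂ * T (k+1) / (1 - c₂) = -(c * T (k+1)) := by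
        rw [hcdef]; field_simp; ring
      have e2 : -(T (k+1)) - c₂ * T (k+1) / (1 - c₂) = -(T (k+1) / (1 - c₂)) := by
        field_simp; ring
      constructor
      · rw [hexp]; linarith [habs2.2]
      · rw [hexp]; linarith [habs2.1]
  have hgp_neg : ∀ k, g k ⬝ᵥ p k < 0 := fun k =>
    lt_of_le_of_lt (descent k).1 (by nlinarith [hT k, hcpos])
  have hpne : ∀ k, p k ≠ 0 := by
    intro k hk
    have := hgp_neg k
    rw [hk, dotProduct_zero] at this
    exact lt_irrefl 0 this
  have hq : ∀ k, 0 < p k ⬝ᵥ p k := by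
    intro k
    have h0 : (0:ℝ) ≤ p k ⬝ᵥ p k := Finset.sum_nonneg fun i _ => mul_self_nonneg _
    rcases eq_or_lt_of_le h0 with h | h
    · exact absurd (dotProduct_self_eq_zero.mp h.symm) (hpne k)
    · exact h
  -- step 2 : Zoutendijk
  set C' : ℝ := Real.sqrt n * C with hC'def
  have hC' : 0 < C' := by
    have : (0:ℝ) < Real.sqrt n := Real.sqrt_pos.mpr (by exact_mod_cast hn)
    positivity
  set s : ℕ → ℝ := fun k => (g k ⬝ᵥ p k) ^ 2 / (p k ⬝ᵥ p k) with hsdef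
  have hs_nonneg : ∀ k, 0 ≤ s k := fun k => div_nonneg (sq_nonneg _) (hq k).le
  have hLd : ∀ k, (g (k+1) - g k) ⬝ᵥ p k ≤ C' * α k * (p k ⬝ᵥ p k) := by
    intro k
    have hΔeq : g (k+1) - g k = gradE (f k + α k • p k) - gradE (f k) := by
      rw [hgdef]; simp only; rw [hf k]
    have h1 := hLip (f k) (f k + α k • p k)
    rw [add_sub_cancel_left, norm_smul, Real.norm_eq_abs, abs_of_pos (hα k)] at h1
    have hsq : Real.sqrt (p k ⬝ᵥ p k) * Real.sqrt (p k ⬝ᵥ p k) = p k ⬝ᵥ p k :=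
      Real.mul_self_sqrt (hq k).le
    have hp_le : ‖p k‖ ≤ Real.sqrt (p k ⬝ᵥ p k) := pinorm_le_sqrt_dot (p k)
    have h2 : ‖g (k+1) - g k‖ ≤ C * (α k * Real.sqrt (p k ⬝ᵥ p k)) := by
      rw [hΔeq]
      refine h1.trans ?_
      have := mul_le_mul_of_nonneg_left hp_le (hα k).le
      nlinarith [hC]
    calc (g (k+1) - g k) ⬝ᵥ p k
        ≤ Real.sqrt n * ‖g (k+1) - g k‖ * Real.sqrt (p k ⬝ᵥ p k) := dot_le_sqrtn _ _
      _ ≤ Real.sqrt n * (C * (α k * Real.sqrt (p k ⬝ᵥ p k))) * Real.sqrt (p k ⬝ᵥ p k) := by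
          apply mul_le_mul_of_nonneg_right _ (Real.sqrt_nonneg _)
          exact mul_le_mul_of_nonneg_left h2 (Real.sqrt_nonneg _)
      _ = C' * α k * (p k ⬝ᵥ p k) := by
          rw [hC'def]
          linear_combination (Real.sqrt n * C * α k) * hsq
  have hdec : ∀ k, E (f (k+1)) ≤ E (f k) - (c₁ * (1 - c₂) / C') * s k := by
    intro k
    have hw1 := hWolfe1 k
    rw [← hf k] at hw1
    set a : ℝ := -(g k ⬝ᵥ p k) with hadef
    have ha : 0 < a := neg_pos.mpr (hgp_neg k)
    have hw2 := hWolfe2 k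
    rw [← hf k] at hw2
    have habs : |g k ⬝ᵥ p k| = a := abs_of_neg (hgp_neg k)
    have h3 : -(c₂ * a) ≤ g (k+1) ⬝ᵥ p k := by
      have := (abs_le.mp hw2).1
      rw [habs] at this
      linarith
    have h4 : (1 - c₂) * a ≤ C' * α k * (p k ⬝ᵥ p k) := by
      have h5 := hLd k
      rw [sub_dotProduct] at h5
      nlinarith [h3]
    have hs_eq : s k = a^2 / (p k ⬝ᵥ p k) := by
      rw [hsdef]; simp only [hadef, neg_sq]
    have h5 : s k ≤ C' * α k * a / (1 - c₂) := by
      rw [hs_eq, div_le_div_iff₀ (hq k) h1c₂]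
      nlinarith [mul_le_mul_of_nonneg_left h4 ha.le, hq k]
    have h6 : (c₁ * (1 - c₂) / C') * s k ≤ c₁ * α k * a := by
      have h7 := mul_le_mul_of_nonneg_left h5 (show (0:ℝ) ≤ c₁*(1-c₂)/C' by positivity)
      have h8 : (c₁*(1-c₂)/C') * (C' * α k * a / (1 - c₂)) = c₁ * α k * a := by
        field_simp
      linarith
    have h9 : c₁ * α k * (g k ⬝ᵥ p k) = -(c₁ * α k * a) := by rw [hadef]; ring
    have hw1' : E (f (k+1)) ≤ E (f k) + -(c₁ * α k * a) := h9 ▸ hw1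
    linarith
  have htel : ∀ N, (c₁ * (1 - c₂) / C') * (∑ k ∈ range N, s k) ≤ E (f 0) - E (f N) := by
    intro N
    induction N with
    | zero => simp
    | succ N ih =>
      rw [Finset.sum_range_succ, mul_add]
      have := hdec N
      linarith
  have hsum : ∀ N, (c₁ * (1 - c₂) / C') * (∑ k ∈ range N, s k) ≤ E (f 0) - B := fun N =>
    (htel N).trans (by linarith [hbdd (f N)])
  -- step 3 : contradiction
  by_contra hne
  have hbdd_above : IsBoundedUnder (· ≤ ·) atTop (fun k => Real.sqrt (T k)) :=
    Filter.isBoundedUnder_of ⟨γbar, hgbd⟩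
  have hbdd_below : IsBoundedUnder (· ≥ ·) atTop (fun k => Real.sqrt (T k)) :=
    Filter.isBoundedUnder_of ⟨0, fun k => Real.sqrt_nonneg _⟩
  set L : ℝ := liminf (fun k => Real.sqrt (T k)) atTop with hLdef
  have h0le : 0 ≤ L :=
    Filter.le_liminf_of_le hbdd_above.isCoboundedUnder_ge
      (Filter.Eventually.of_forall fun k => Real.sqrt_nonneg _)
  have hL : 0 < L := lt_of_le_of_ne h0le (Ne.symm hne)
  have hev : ∀ᶠ k in atTop, L / 2 < Real.sqrt (T k) :=
    Filter.eventually_lt_of_lt_liminf (by rw [← hLdef]; linarith) hbdd_below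
  obtain ⟨K, hK⟩ := Filter.eventually_atTop.mp hev
  have hTK : ∀ k, K ≤ k → (L/2)^2 ≤ T k := by
    intro k hk
    have h1 := hK k hk
    have h2 : (L/2)^2 < Real.sqrt (T k) ^ 2 := by
      apply pow_lt_pow_left₀ h1 (by linarith) (by norm_num)
    rw [Real.sq_sqrt (hT k).le] at h2
    exact h2.le
  obtain ⟨t, ht0, htT⟩ := unif_lb T hT K ((L/2)^2) (by positivity) hTK
  obtain ⟨cinv, hcinv0, hcinv⟩ := quad_upper (M⁻¹ : Matrix (Fin n) (Fin n) ℝ)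
  set m : ℕ → ℝ := fun k => p k ⬝ᵥ M.mulVec (p k) with hmdef
  have hmpos : ∀ k, 0 < m k := fun k => posdef_dot hM (hpne k)
  have hqm : ∀ k, p k ⬝ᵥ p k ≤ cinv * m k := by
    intro k
    have h1 := gen_cs hM (p k)
    have h2 := mul_le_mul_of_nonneg_right (hcinv (p k)) (hmpos k).le
    nlinarith [hq k, hmpos k]
  set θ : ℝ := (1 + c₂) / (1 - c₂) with hθdef
  have hθ1 : 1 ≤ θ := by
    rw [hθdef, le_div_iff₀ h1c₂]; linarith
  have hm0 : m 0 = T 0 := by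
    show p 0 ⬝ᵥ M.mulVec (p 0) = T 0
    rw [hp0, Matrix.mulVec_neg, dotProduct_neg, neg_dotProduct, neg_neg, dot_inv_M hM]
  have hrec : ∀ k, m (k+1) ≤ θ * T (k+1) + (T (k+1) / T k)^2 * m k := by
    intro k
    have e1 := dot_inv_M hM (gradE (f (k+1))) (M⁻¹.mulVec (gradE (f (k+1))))
    have e2 := dot_inv_M hM (gradE (f (k+1))) (p k)
    have e3 : p k ⬝ᵥ M.mulVec (M⁻¹.mulVec (gradE (f (k+1)))) = gradE (f (k+1)) ⬝ᵥ p k := by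
      rw [Matrix.mulVec_mulVec, MinvM hM, Matrix.one_mulVec, dotProduct_comm]
    have hexp : m (k+1) = T (k+1) - 2*(T (k+1)/T k)*(g (k+1) ⬝ᵥ p k)
        + (T (k+1)/T k)^2 * m k := by
      show p (k+1) ⬝ᵥ M.mulVec (p (k+1)) = _
      rw [hpk k, Matrix.mulVec_add, Matrix.mulVec_neg, Matrix.mulVec_smul]
      simp only [dotProduct_add, add_dotProduct, dotProduct_neg, neg_dotProduct,
        dotProduct_smul, smul_dotProduct, neg_neg, smul_eq_mul]
      rw [e1, e2, e3]
      simp only [hTdef, hgdef, hmdef]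
      ring
    -- cross bound
    have hds := descent k
    have hneg' : g k ⬝ᵥ p k < 0 := hgp_neg k
    have habs : |g k ⬝ᵥ p k| ≤ T k / (1 - c₂) := by
      rw [abs_of_neg hneg']; linarith [hds.2]
    have hcross : |g (k+1) ⬝ᵥ p k| ≤ c₂ * (T k / (1 - c₂)) := by
      have h2 := hWolfe2 k
      rw [← hf k] at h2
      exact h2.trans (mul_le_mul_of_nonneg_left habs hc₂0.le)
    have hβpos : 0 < T (k+1) / T k := div_pos (hT (k+1)) (hT k)
    have hcb : -(2*(T (k+1)/T k)*(g (k+1) ⬝ᵥ p k)) ≤ 2 * c₂ * T (k+1) / (1 - c₂) := by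
      have h3 : -(g (k+1) ⬝ᵥ p k) ≤ c₂ * (T k / (1 - c₂)) := by
        have := (abs_le.mp hcross).1; linarith
      have h4 := mul_le_mul_of_nonneg_left h3 (by positivity : (0:ℝ) ≤ 2*(T (k+1)/T k))
      have h5 : 2*(T (k+1)/T k) * (c₂ * (T k / (1 - c₂))) = 2 * c₂ * T (k+1) / (1 - c₂) := by
        field_simp [(hT k).ne']
      calc -(2*(T (k+1)/T k)*(g (k+1) ⬝ᵥ p k)) = 2*(T (k+1)/T k) * (-(g (k+1) ⬝ᵥ p k)) := by
            ring
        _ ≤ 2*(T (k+1)/T k) * (c₂ * (T k / (1 - c₂))) := h4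
        _ = 2 * c₂ * T (k+1) / (1 - c₂) := h5
    have hθeq : θ * T (k+1) = T (k+1) + 2 * c₂ * T (k+1) / (1 - c₂) := by
      rw [hθdef]
      field_simp
      ring
    rw [hexp]
    linarith [hcb, hθeq]
  have hθpos0 : (0:ℝ) < θ := lt_of_lt_of_le one_pos hθ1
  have hm_bd : ∀ k, m k ≤ θ * (k+1) * T k ^ 2 / t := by
    intro k
    induction k with
    | zero =>
      rw [hm0, le_div_iff₀ ht0]
      push_cast
      nlinarith [htT 0, hT 0, hθ1]
    | succ k ih =>
      have h1 := hrec k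
      have h2 : (T (k+1)/T k)^2 * m k ≤ (T (k+1)/T k)^2 * (θ * (k+1) * T k ^ 2 / t) :=
        mul_le_mul_of_nonneg_left ih (by positivity)
      have h3 : (T (k+1)/T k)^2 * (θ * (k+1) * T k ^ 2 / t) = θ * (k+1) * T (k+1) ^ 2 / t := by
        field_simp [(hT k).ne']
      have h4 : θ * T (k+1) ≤ θ * T (k+1) ^ 2 / t := by
        rw [le_div_iff₀ ht0]
        have h6 := htT (k+1)
        nlinarith [mul_le_mul_of_nonneg_left h6 (mul_pos hθpos0 (hT (k+1))).le]
      have h5 : θ * (↑(k+1)+1) * T (k+1) ^ 2 / t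
          = θ * T (k+1) ^ 2 / t + θ * (k+1) * T (k+1) ^ 2 / t := by
        push_cast
        ring
      push_cast at h5 ⊢
      linarith [h1, h2, h3.le, h3.ge, h4]
  set D : ℝ := c ^ 2 * t / (cinv * θ) with hDdef
  have hD : 0 < D := by
    apply div_pos (by positivity) (by positivity)
  have hslb : ∀ k : ℕ, D * (1 / (k+1)) ≤ s k := by
    intro k
    have hθpos : (0:ℝ) < θ := lt_of_lt_of_le one_pos hθ1
    have hk1 : (0:ℝ) < (k:ℝ) + 1 := by positivity
    have hBk : (0:ℝ) < cinv * (θ * (k+1) * T k ^ 2 / t) :=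
      mul_pos hcinv0 (div_pos (mul_pos (mul_pos hθpos hk1) (pow_pos (hT k) 2)) ht0)
    have hqB : p k ⬝ᵥ p k ≤ cinv * (θ * (k+1) * T k ^ 2 / t) :=
      (hqm k).trans (mul_le_mul_of_nonneg_left (hm_bd k) hcinv0.le)
    have hnum : (c * T k)^2 ≤ (g k ⬝ᵥ p k)^2 := by
      have hd := (descent k).1
      nlinarith [hd, mul_pos hcpos (hT k)]
    have h1 : (c * T k)^2 / (cinv * (θ * (k+1) * T k ^ 2 / t)) ≤ s k := by
      have h2 : (g k ⬝ᵥ p k)^2 / (cinv * (θ * (k+1) * T k ^ 2 / t)) ≤ (g k ⬝ᵥ p k)^2 / (p k ⬝ᵥ p k) :=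
        div_le_div_of_nonneg_left (sq_nonneg _) (hq k) hqB
      have h3 : (c * T k)^2 / (cinv * (θ * (k+1) * T k ^ 2 / t))
          ≤ (g k ⬝ᵥ p k)^2 / (cinv * (θ * (k+1) * T k ^ 2 / t)) :=
        (div_le_div_iff_of_pos_right hBk).mpr hnum
      exact h3.trans h2
    have heq : (c * T k)^2 / (cinv * (θ * (k+1) * T k ^ 2 / t)) = D * (1 / (k+1)) := by
      rw [hDdef]
      field_simp [(hT k).ne', ht0.ne']
    rw [← heq]
    exact h1
  -- sum contradiction
  set Z : ℝ := (E (f 0) - B) / (c₁ * (1 - c₂) / C') with hZdef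
  have hZ : ∀ N, ∑ k ∈ range N, s k ≤ Z := by
    intro N
    rw [hZdef, le_div_iff₀ (by positivity)]
    calc (∑ k ∈ range N, s k) * (c₁ * (1 - c₂) / C')
        = (c₁ * (1 - c₂) / C') * (∑ k ∈ range N, s k) := by ring
      _ ≤ E (f 0) - B := hsum N
  obtain ⟨N, hN⟩ := (Filter.tendsto_atTop.mp Real.tendsto_sum_range_one_div_nat_succ_atTop
    ((Z + 1) / D)).exists
  have hlow : D * (∑ k ∈ range N, (1 / (k+1) : ℝ)) ≤ ∑ k ∈ range N, s k := by
    rw [Finset.mul_sum]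
    exact Finset.sum_le_sum fun k _ => hslb k
  have : D * ((Z+1)/D) ≤ Z := le_trans (by exact mul_le_mul_of_nonneg_left hN hD.le |>.trans hlow) (hZ N)
  rw [mul_div_cancel₀ _ hD.ne'] at this
  linarith
end
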